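/- arXiv:1511.08653 — 12 statements merged into one kernel-verified Lean document; each statement's English description precedes it below -/
import Mathlib

section
/- For all natural numbers n and k with n + 2 ≤ 2k, the integers t_j = C(n, j) - C(n, j+1) satisfy t_{k-1} · t_{k+1} ≤ t_k², i.e. (C(n, k-1) - C(n, k)) · (C(n, k+1) - C(n, k+2)) ≤ (C(n, k) - C(n, k+1))² in ℤ. Consequently, for every fixed n the sequence i^{2row}_{n,1}, …, i^{2row}_{n,n}, where i^{2row}_{n,k} counts involutions of [n] of two-rowed shape (k, n-k) with longest increasing subsequence of length k, is log concave. -/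
/-- Log concavity of the ballot numbers `t_k = C(n,k) - C(n,k+1)` counting involutions
of `[n]` of two-rowed shape `(k, n-k)` with longest increasing subsequence of length `k`. -/
theorem two_row_involutions_log_concave (n k : ℕ) (hk : n + 2 ≤ 2 * k) :
    ((n.choose (k - 1) : ℤ) - n.choose k) * ((n.choose (k + 1) : ℤ) - n.choose (k + 2)) ≤
      ((n.choose k : ℤ) - n.choose (k + 1)) ^ 2 := by
  rcases le_or_gt n k with hn | hn
  · -- trivial case: `C(n,k+1) = C(n,k+2) = 0`
    have h1 : n.choose (k + 1) = 0 := Nat.choose_eq_zero_of_lt (by omega)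
    have h2 : n.choose (k + 2) = 0 := Nat.choose_eq_zero_of_lt (by omega)
    rw [h1, h2]
    push_cast
    simpa using sq_nonneg ((n.choose k : ℤ))
  · -- main case: `k < n`
    have hk2 : 2 ≤ k := by omega
    set K : ℤ := (k : ℤ) with hK
    set N : ℤ := (n : ℤ) with hN
    set c1 : ℤ := (n.choose (k - 1) : ℤ) with hc1
    set c2 : ℤ := (n.choose k : ℤ) with hc2
    set c3 : ℤ := (n.choose (k + 1) : ℤ) with hc3
    set c4 : ℤ := (n.choose (k + 2) : ℤ) with hc4
    have hKN : K + 1 ≤ N := by simp only [hK, hN]; push_cast; omega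
    have hK2 : (2 : ℤ) ≤ K := by simp only [hK]; push_cast; omega
    have hNK : N + 2 ≤ 2 * K := by simp only [hK, hN]; push_cast; omega
    -- basic recurrences
    have e1 : c2 * K = c1 * (N - K + 1) := by
      have h := Nat.choose_succ_right_eq n (k - 1)
      rw [show k - 1 + 1 = k from by omega] at h
      have h' : (n.choose k : ℤ) * k = n.choose (k - 1) * ((n - (k - 1) : ℕ) : ℤ) := by
        exact_mod_cast congrArg (Nat.cast : ℕ → ℤ) h
      rw [h']
      congr 1
      have : ((n - (k - 1) : ℕ) : ℤ) = N - ((k - 1 : ℕ) : ℤ) := by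
        rw [Int.ofNat_sub (by omega : k - 1 ≤ n)]
      rw [this]
      have : ((k - 1 : ℕ) : ℤ) = K - 1 := by
        rw [Int.ofNat_sub (by omega : 1 ≤ k)]; simp [hK]
      rw [this]; ring
    have e2 : c3 * (K + 1) = c2 * (N - K) := by
      have h := Nat.choose_succ_right_eq n k
      have h' : (n.choose (k + 1) : ℤ) * (k + 1) = n.choose k * ((n - k : ℕ) : ℤ) := by
        exact_mod_cast congrArg (Nat.cast : ℕ → ℤ) h
      rw [h', Int.ofNat_sub (by omega : k ≤ n)]
    have e3 : c4 * (K + 2) = c3 * (N - K - 1) := by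
      have h := Nat.choose_succ_right_eq n (k + 1)
      have h' : (n.choose (k + 2) : ℤ) * (k + 1 + 1) = n.choose (k + 1) * ((n - (k + 1) : ℕ) : ℤ) := by
        exact_mod_cast congrArg (Nat.cast : ℕ → ℤ) h
      rw [show ((n - (k + 1) : ℕ) : ℤ) = N - K - 1 by
        rw [Int.ofNat_sub (by omega : k + 1 ≤ n)]; push_cast; ring] at h'
      rw [show K + 2 = (k : ℤ) + 1 + 1 by push_cast; ring]
      exact h'
    have h1 : K * (c1 - c2) = c1 * (2 * K - N - 1) := by linear_combination -e1
    have h2 : (K + 1) * (c2 - c3) = c2 * (2 * K + 1 - N) := by linear_combination -e2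
    have h3 : (K + 2) * (c3 - c4) = c3 * (2 * K + 3 - N) := by linear_combination -e3
    have cross : c1 * c3 * ((N - K + 1) * (K + 1)) = c2 ^ 2 * (K * (N - K)) := by
      linear_combination (-(c3 * (K + 1))) * e1 + (c2 * K) * e2
    have hsq : (c2 - c3) ^ 2 * ((K + 1) ^ 2) = c2 ^ 2 * (2 * K + 1 - N) ^ 2 := by
      linear_combination ((K + 1) * (c2 - c3) + c2 * (2 * K + 1 - N)) * h2
    have hprod : (c1 - c2) * (c3 - c4) * (K * (K + 2)) =
        c1 * c3 * ((2 * K - N - 1) * (2 * K + 3 - N)) := by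
      linear_combination ((K + 2) * (c3 - c4)) * h1 + (c1 * (2 * K - N - 1)) * h3
    -- key scaled inequality
    have hc2pos : 0 < c2 := by
      rw [hc2]; exact_mod_cast Nat.choose_pos (by omega : k ≤ n)
    have hYpos : (0 : ℤ) < (N - K + 1) * (K + 1) := by
      apply mul_pos <;> linarith
    have hdiff : c2 ^ 2 * ((2 * K + 1 - N) ^ 2 * (K * (K + 2))) * ((N - K + 1) * (K + 1)) -
        c1 * c3 * ((2 * K - N - 1) * (2 * K + 3 - N) * (K + 1) ^ 2) * ((N - K + 1) * (K + 1)) =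
        c2 ^ 2 * (K * (K + 1) * (N + 1) * ((2 * K - N) ^ 2 + (2 * K - N) + 2 * K + 2)) := by
      linear_combination (-((2 * K - N - 1) * (2 * K + 3 - N) * (K + 1) ^ 2)) * cross
    have hbr : 0 ≤ c2 ^ 2 * (K * (K + 1) * (N + 1) * ((2 * K - N) ^ 2 + (2 * K - N) + 2 * K + 2)) := by
      refine mul_nonneg (sq_nonneg c2) ?_
      refine mul_nonneg (mul_nonneg (mul_nonneg ?_ ?_) ?_) ?_
      · linarith
      · linarith
      · linarith
      · nlinarith [sq_nonneg (2 * K - N)]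
    have hscaled : c1 * c3 * ((2 * K - N - 1) * (2 * K + 3 - N) * (K + 1) ^ 2) ≤
        c2 ^ 2 * ((2 * K + 1 - N) ^ 2 * (K * (K + 2))) := by
      rw [← hdiff] at hbr
      exact le_of_mul_le_mul_right (sub_nonneg.mp hbr) hYpos
    have hPpos : (0 : ℤ) < K * (K + 2) * (K + 1) ^ 2 := by positivity
    rw [← mul_le_mul_iff_of_pos_right hPpos]
    calc (c1 - c2) * (c3 - c4) * (K * (K + 2) * (K + 1) ^ 2)
        = c1 * c3 * ((2 * K - N - 1) * (2 * K + 3 - N) * (K + 1) ^ 2) := by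
          linear_combination ((K + 1) ^ 2) * hprod
      _ ≤ c2 ^ 2 * ((2 * K + 1 - N) ^ 2 * (K * (K + 2))) := hscaled
      _ = (c2 - c3) ^ 2 * (K * (K + 2) * (K + 1) ^ 2) := by
          linear_combination (-(K * (K + 2))) * hsq
end

section
/- For all natural numbers n and k with n + 2 ≤ 2k, one has ((C(n, k-1) - C(n, k)) · (C(n, k+1) - C(n, k+2)))² ≤ ((C(n, k) - C(n, k+1))²)² in ℤ. Consequently, for every fixed n the sequence ℓ^{2row}_{n,1}, …, ℓ^{2row}_{n,n}, where ℓ^{2row}_{n,k} = (C(n, k) - C(n, k+1))² counts permutations of [n] of two-rowed shape (k, n-k) with longest increasing subsequence of length k, is log concave. -/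
set_option maxHeartbeats 800000


/-- Log concavity of the squared ballot numbers `(C(n,k) - C(n,k+1))²` counting
permutations of `[n]` of two-rowed shape `(k, n-k)` with longest increasing
subsequence of length `k`. -/
theorem two_row_permutations_log_concave (n k : ℕ) (hk : n + 2 ≤ 2 * k) :
    (((n.choose (k - 1) : ℤ) - n.choose k) * ((n.choose (k + 1) : ℤ) - n.choose (k + 2))) ^ 2 ≤
      (((n.choose k : ℤ) - n.choose (k + 1)) ^ 2) ^ 2 := by
  rcases le_or_gt n k with hnk | hnk
  · have h1 : n.choose (k+1) = 0 := Nat.choose_eq_zero_of_lt (by omega)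
    have h2 : n.choose (k+2) = 0 := Nat.choose_eq_zero_of_lt (by omega)
    rw [h1, h2]
    simp
  · -- k < n
    set q : ℕ := n - k with hq
    have hqk : n = k + q := by omega
    have hq1 : 1 ≤ q := by omega
    have hkq : q + 2 ≤ k := by omega
    have hk1 : 1 ≤ k := by omega
    set a1 : ℤ := (n.choose (k-1) : ℤ)
    set a2 : ℤ := (n.choose k : ℤ)
    set a3 : ℤ := (n.choose (k+1) : ℤ)
    set a4 : ℤ := (n.choose (k+2) : ℤ)
    set K : ℤ := (k : ℤ)
    set Q : ℤ := (q : ℤ)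
    have hQ1 : 1 ≤ Q := by show (1:ℤ) ≤ (q:ℤ); exact_mod_cast hq1
    have hKQ : Q + 2 ≤ K := by show (q:ℤ) + 2 ≤ (k:ℤ); exact_mod_cast hkq
    have ha2 : 0 ≤ a2 := Int.natCast_nonneg _
    -- identities
    have e1 : a3 * (K + 1) = a2 * Q := by
      have := Nat.choose_succ_right_eq n k
      have h' : n - k = q := rfl
      have : (n.choose (k+1) : ℤ) * (k + 1) = (n.choose k : ℤ) * q := by
        rw [h'] at this; exact_mod_cast this
      simpa using this
    have e2 : a4 * (K + 2) = a3 * (Q - 1) := by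
      have := Nat.choose_succ_right_eq n (k+1)
      have h' : n - (k+1) = q - 1 := by omega
      have h2 : (n.choose (k+2) : ℤ) * (k + 2) = (n.choose (k+1) : ℤ) * ((q : ℤ) - 1) := by
        rw [h'] at this
        have hc : ((q - 1 : ℕ) : ℤ) = (q : ℤ) - 1 := by omega
        have := congrArg (fun x : ℕ => (x : ℤ)) this
        push_cast at this
        rw [hc] at this
        convert this using 2 <;> push_cast <;> ring
      simpa [add_assoc] using h2
    have e3 : a2 * K = a1 * (Q + 1) := by
      have := Nat.choose_succ_right_eq n (k-1)
      have h' : k - 1 + 1 = k := by omega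
      have h'' : n - (k-1) = q + 1 := by omega
      rw [h', h''] at this
      have := congrArg (fun x : ℕ => (x : ℤ)) this
      push_cast at this
      simpa using this
    -- derived linear relations
    have E1 : (Q + 1) * (a1 - a2) = (K - Q - 1) * a2 := by linarith [e3]
    have E3 : (K + 1) * (a2 - a3) = (K + 1 - Q) * a2 := by linarith [e1]
    have E2 : (K + 1)^2 * (K + 2) * (a3 - a4) = Q * (K + 1) * (K - Q + 3) * a2 := by
      linear_combination ((K+1)*(K-Q+3)) * e1 - (K+1)^2 * e2
    -- main inequality: a*b ≤ c^2
    have key : (a1 - a2) * (a3 - a4) ≤ (a2 - a3)^2 := by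
      have hpos : (0 : ℤ) < (Q + 1) * ((K + 1)^2 * (K + 2)) := by positivity
      rw [← mul_le_mul_iff_right₀ hpos]
      have lhs_eq : (Q + 1) * ((K + 1)^2 * (K + 2)) * ((a1 - a2) * (a3 - a4)) =
          ((Q + 1) * (a1 - a2)) * ((K + 1)^2 * (K + 2) * (a3 - a4)) := by ring
      have rhs_eq : (Q + 1) * ((K + 1)^2 * (K + 2)) * (a2 - a3)^2 =
          (Q + 1) * (K + 2) * ((K + 1) * (a2 - a3))^2 := by ring
      rw [lhs_eq, rhs_eq, E1, E2, E3]
      have hD : 1 ≤ K - Q - 1 := by linarith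
      have t1 : (K - Q - 1) * (K - Q + 3) ≤ (K + 1 - Q)^2 := by nlinarith [sq_nonneg (K - Q + 1)]
      have h4 : (K - Q - 1) * Q * (K + 1) * (K - Q + 3) ≤
          (Q + 1) * (K + 2) * (K + 1 - Q)^2 := by
        calc (K - Q - 1) * Q * (K + 1) * (K - Q + 3)
            = ((K - Q - 1) * (K - Q + 3)) * (Q * (K + 1)) := by ring
          _ ≤ (K + 1 - Q)^2 * (Q * (K + 1)) :=
              mul_le_mul_of_nonneg_right t1
                (mul_nonneg (by linarith) (by linarith))
          _ ≤ (K + 1 - Q)^2 * ((Q + 1) * (K + 2)) :=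
              mul_le_mul_of_nonneg_left
                (mul_le_mul (by linarith) (by linarith) (by linarith) (by linarith))
                (sq_nonneg _)
          _ = (Q + 1) * (K + 2) * (K + 1 - Q)^2 := by ring
      calc (K - Q - 1) * a2 * (Q * (K + 1) * (K - Q + 3) * a2)
          = (K - Q - 1) * Q * (K + 1) * (K - Q + 3) * a2^2 := by ring
        _ ≤ (Q + 1) * (K + 2) * (K + 1 - Q)^2 * a2^2 :=
            mul_le_mul_of_nonneg_right h4 (sq_nonneg a2)
        _ = (Q + 1) * (K + 2) * ((K + 1 - Q) * a2)^2 := by ring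
    have hab : 0 ≤ (a1 - a2) * (a3 - a4) := by
      have h1 : a2 ≤ a1 := by nlinarith [e3]
      have h2 : a4 ≤ a3 := by
        have ha3 : 0 ≤ a3 := Int.natCast_nonneg _
        nlinarith [e2]
      have h0 : 0 ≤ a3 - a4 := by linarith
      exact mul_nonneg (by nlinarith) h0
    calc ((a1 - a2) * (a3 - a4))^2 ≤ ((a2 - a3)^2)^2 := by
          apply pow_le_pow_left₀ hab key
end

section
/- For every natural number n ≥ 1, define I : ℕ → ℚ by I(k) = (2n)! / ((2n-k) · (2n-k+1) · (k-1)! · k! · (2n-2k)!) for 1 ≤ k ≤ n (all factors cast from ℕ to ℚ). Then for all k with 2 ≤ k ≤ n-1, one has I(k-1) · I(k+1) ≤ I(k)². Consequently, for every fixed n the sequence i^{dhook}_{2n,1}, …, i^{dhook}_{2n,n} counting involutions of [2n] of double hook shape (k², 1^{2n-2k}) with longest increasing subsequence of length k is log concave. -/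
lemma dhook_core (j t : ℕ) :
    (j+2*t+4)*(j+2*t+5)*((j+1)*((2*t+1)*(2*t+2)))
      ≤ (j+2*t+6)*(j+2*t+3)*((j+3)*((2*t+3)*(2*t+4))) := by
  have h : (j+2*t+6)*(j+2*t+3)*((j+3)*((2*t+3)*(2*t+4)))
      = (j+2*t+4)*(j+2*t+5)*((j+1)*((2*t+1)*(2*t+2)))
        + (608 + 1248*t + 920*t^2 + 288*t^3 + 32*t^4 + 482*j + 772*j*t + 392*j*t^2
           + 64*j*t^3 + 124*j^2 + 148*j^2*t + 40*j^2*t^2 + 10*j^3 + 8*j^3*t) := by ring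
  omega

lemma dhook_aux (j t : ℕ) :
    ((j+2*t+4)*(j+2*t+5)*(Nat.factorial (j+1))*(Nat.factorial (j+2))*(Nat.factorial (2*t+2)))^2
    ≤ ((j+2*t+5)*(j+2*t+6)*(Nat.factorial j)*(Nat.factorial (j+1))*(Nat.factorial (2*t+4))) *
      ((j+2*t+3)*(j+2*t+4)*(Nat.factorial (j+2))*(Nat.factorial (j+3))*(Nat.factorial (2*t))) := by
  have e1 : Nat.factorial (j+1) = (j+1) * Nat.factorial j := rfl
  have e2 : Nat.factorial (j+3) = (j+3) * Nat.factorial (j+2) := rfl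
  have e3 : Nat.factorial (2*t+2) = (2*t+2) * ((2*t+1) * Nat.factorial (2*t)) := rfl
  have e4 : Nat.factorial (2*t+4) = (2*t+4) * ((2*t+3) * Nat.factorial (2*t+2)) := rfl
  calc ((j+2*t+4)*(j+2*t+5)*(Nat.factorial (j+1))*(Nat.factorial (j+2))*(Nat.factorial (2*t+2)))^2
      = ((j+2*t+4)*(j+2*t+5)*((j+1)*((2*t+1)*(2*t+2)))) *
        ((j+2*t+4)*(j+2*t+5)*((j+1)*((2*t+1)*(2*t+2))) *
          (Nat.factorial j * Nat.factorial (j+2) * Nat.factorial (2*t))^2) := by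
        rw [e1, e3]; ring
    _ ≤ ((j+2*t+6)*(j+2*t+3)*((j+3)*((2*t+3)*(2*t+4)))) *
        ((j+2*t+4)*(j+2*t+5)*((j+1)*((2*t+1)*(2*t+2))) *
          (Nat.factorial j * Nat.factorial (j+2) * Nat.factorial (2*t))^2) :=
        Nat.mul_le_mul_right _ (dhook_core j t)
    _ = _ := by rw [e2, e4, e3, e1]; ring

/-- Log concavity of the sequence counting involutions of `[2n]` of double hook
shape `(k², 1^(2n-2k))` with longest increasing subsequence of length `k`, whose
`k`-th term is given by the hook length formula as
`(2n)! / ((2n-k)(2n-k+1)(k-1)! k! (2n-2k)!)`. -/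
theorem double_hook_involutions_log_concave (n : ℕ) (hn : 1 ≤ n) (I : ℕ → ℚ)
    (hI : ∀ k, 1 ≤ k → k ≤ n →
      I k = (Nat.factorial (2 * n) : ℚ) /
        (((2 * n - k : ℕ) : ℚ) * ((2 * n - k + 1 : ℕ) : ℚ) *
          (Nat.factorial (k - 1) : ℚ) * (Nat.factorial k : ℚ) *
          (Nat.factorial (2 * n - 2 * k) : ℚ))) :
    ∀ k, 2 ≤ k → k ≤ n - 1 → I (k - 1) * I (k + 1) ≤ (I k) ^ 2 := by
  intro k hk2 hkn
  obtain ⟨j, rfl⟩ : ∃ j, k = j + 2 := ⟨k - 2, by omega⟩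
  obtain ⟨t, rfl⟩ : ∃ t, n = j + t + 3 := ⟨n - j - 3, by omega⟩
  have h1 : j + 2 - 1 = j + 1 := rfl
  rw [h1, hI (j+1) (by omega) (by omega), hI (j+2) (by omega) (by omega),
      hI (j+2+1) (by omega) (by omega)]
  have e1 : 2 * (j + t + 3) - (j + 1) = j + 2*t + 5 := by omega
  have e2 : 2 * (j + t + 3) - (j + 2) = j + 2*t + 4 := by omega
  have e3 : 2 * (j + t + 3) - (j + 2 + 1) = j + 2*t + 3 := by omega
  have e4 : 2 * (j + t + 3) - 2 * (j + 1) = 2*t + 4 := by omega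
  have e5 : 2 * (j + t + 3) - 2 * (j + 2) = 2*t + 2 := by omega
  have e6 : 2 * (j + t + 3) - 2 * (j + 2 + 1) = 2*t := by omega
  have e7 : j + 1 - 1 = j := rfl
  have e8 : j + 2 - 1 = j + 1 := rfl
  have e9 : j + 2 + 1 - 1 = j + 2 := rfl
  rw [e1, e2, e3, e4, e5, e6, e7, e8, e9]
  rw [div_pow, div_mul_div_comm, ← sq]
  have hfac : ∀ m : ℕ, (0:ℚ) < (Nat.factorial m : ℚ) := fun m => by
    exact_mod_cast m.factorial_pos
  have hA : (0:ℚ) < ((j + 2*t + 5 : ℕ) : ℚ) * ((j + 2*t + 5 + 1 : ℕ) : ℚ) *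
      (Nat.factorial j : ℚ) * (Nat.factorial (j+1) : ℚ) * (Nat.factorial (2*t+4) : ℚ) := by
    have := hfac j; have := hfac (j+1); have := hfac (2*t+4)
    positivity
  have hB : (0:ℚ) < ((j + 2*t + 3 : ℕ) : ℚ) * ((j + 2*t + 3 + 1 : ℕ) : ℚ) *
      (Nat.factorial (j+2) : ℚ) * (Nat.factorial (j+2+1) : ℚ) * (Nat.factorial (2*t) : ℚ) := by
    have := hfac (j+2); have := hfac (j+2+1); have := hfac (2*t)
    positivity
  have hC : (0:ℚ) < ((j + 2*t + 4 : ℕ) : ℚ) * ((j + 2*t + 4 + 1 : ℕ) : ℚ) *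
      (Nat.factorial (j+1) : ℚ) * (Nat.factorial (j+2) : ℚ) * (Nat.factorial (2*t+2) : ℚ) := by
    have := hfac (j+1); have := hfac (j+2); have := hfac (2*t+2)
    positivity
  rw [div_le_div_iff₀ (by positivity) (by positivity)]
  have key : (((j+2*t+4)*(j+2*t+5)*(Nat.factorial (j+1))*(Nat.factorial (j+2))*(Nat.factorial (2*t+2)))^2 : ℚ)
      ≤ (((j+2*t+5)*(j+2*t+6)*(Nat.factorial j)*(Nat.factorial (j+1))*(Nat.factorial (2*t+4))) *
        ((j+2*t+3)*(j+2*t+4)*(Nat.factorial (j+2))*(Nat.factorial (j+3))*(Nat.factorial (2*t))) : ℚ) := by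
    exact_mod_cast dhook_aux j t
  have hF : (0:ℚ) ≤ (Nat.factorial (2 * (j + t + 3)) : ℚ) ^ 2 := by positivity
  push_cast at key ⊢
  nlinarith [mul_le_mul_of_nonneg_left key hF]
end

section
/- For all natural numbers n and k with 1 ≤ k ≤ n, the following inequality holds in ℤ: (k-1) · (2n-2k) · (2n-2k-1) · (2n-k+1) · (2n-k) ≤ (k+1) · (2n-2k+2) · (2n-2k+1) · (2n-k+2) · (2n-k-1). -/
/-- The integer inequality to which the log concavity of the double hook counting
sequence reduces after substituting the hook length formula and cancelling. -/
theorem double_hook_integer_inequality (n k : ℕ) (hk1 : 1 ≤ k) (hkn : k ≤ n) :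
    ((k : ℤ) - 1) * (2 * (n : ℤ) - 2 * k) * (2 * (n : ℤ) - 2 * k - 1) *
        (2 * (n : ℤ) - k + 1) * (2 * (n : ℤ) - k) ≤
      ((k : ℤ) + 1) * (2 * (n : ℤ) - 2 * k + 2) * (2 * (n : ℤ) - 2 * k + 1) *
        (2 * (n : ℤ) - k + 2) * (2 * (n : ℤ) - k - 1) := by
  have h1 : (1:ℤ) ≤ (k:ℤ) := by exact_mod_cast hk1
  have h2 : (k:ℤ) ≤ (n:ℤ) := by exact_mod_cast hkn
  set a : ℤ := (k:ℤ) with ha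
  set b : ℤ := (n:ℤ) - (k:ℤ) with hb
  have hb0 : 0 ≤ b := by omega
  have : (n:ℤ) = a + b := by omega
  rw [this]
  nlinarith [sq_nonneg a, sq_nonneg b, sq_nonneg (a*b), sq_nonneg (a+b), mul_nonneg hb0 hb0, sq_nonneg (a-1), mul_nonneg (mul_nonneg hb0 hb0) hb0, mul_nonneg (sub_nonneg.2 h1) hb0, mul_nonneg (mul_nonneg (sub_nonneg.2 h1) hb0) hb0, mul_nonneg (mul_nonneg (mul_nonneg (sub_nonneg.2 h1) hb0) hb0) hb0]
end

section
/- Let u : ℝ → ℝ be twice continuously differentiable, satisfying u''(x) = x·u(x) + 2·u(x)³ for all real x, with u(x) → 0, u'(x) → 0 and x·u(x)² → 0 as x → ∞, and such that t ↦ u(t)² is integrable on (x, ∞) for every real x. Then for every real x, (u'(x))² = x·u(x)² + h(x) + u(x)⁴, where h(x) = ∫ₓ^∞ u(t)² dt. -/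
open MeasureTheory Filter Set

/-- Multiplying the Painlevé II equation by `u'` and integrating from `x` to `∞`
gives `(u'(x))² = x·u(x)² + h(x) + u(x)⁴` where `h(x) = ∫ₓ^∞ u(t)² dt`. -/
theorem painleve_integrated_identity (u : ℝ → ℝ) (hu : ContDiff ℝ 2 u)
    (hode : ∀ x : ℝ, deriv (deriv u) x = x * u x + 2 * (u x) ^ 3)
    (hu0 : Tendsto u atTop (nhds 0))
    (hu'0 : Tendsto (deriv u) atTop (nhds 0))
    (hxu : Tendsto (fun x : ℝ => x * (u x) ^ 2) atTop (nhds 0))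
    (hint : ∀ x : ℝ, IntegrableOn (fun t : ℝ => (u t) ^ 2) (Ioi x)) :
    ∀ x : ℝ, (deriv u x) ^ 2 =
      x * (u x) ^ 2 + (∫ t in Ioi x, (u t) ^ 2) + (u x) ^ 4 := by
  intro x
  set F : ℝ → ℝ := fun y => (deriv u y) ^ 2 - y * (u y) ^ 2 - (u y) ^ 4 with hF
  have hudiff : Differentiable ℝ u := hu.differentiable (by norm_num)
  have hu'diff : Differentiable ℝ (deriv u) := by
    have := (hu.iterate_deriv' 1 1).differentiable (by norm_num)
    simpa using this
  have hder : ∀ y : ℝ, HasDerivAt F (-(u y) ^ 2) y := by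
    intro y
    have h1 : HasDerivAt u (deriv u y) y := (hudiff y).hasDerivAt
    have h2 : HasDerivAt (deriv u) (deriv (deriv u) y) y := (hu'diff y).hasDerivAt
    have h2' : HasDerivAt (deriv u) (y * u y + 2 * (u y) ^ 3) y := by
      rw [← hode y]; exact h2
    have hA : HasDerivAt (fun z => (deriv u z) ^ 2)
        (2 * (deriv u y) * (y * u y + 2 * (u y) ^ 3)) y := by
      have := h2'.fun_pow 2
      simpa [mul_comm, mul_assoc, mul_left_comm] using this
    have hB : HasDerivAt (fun z => z * (u z) ^ 2)
        (1 * (u y) ^ 2 + y * (2 * (u y) * deriv u y)) y := by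
      exact (hasDerivAt_id y).mul (by simpa [mul_comm, mul_assoc] using h1.fun_pow 2)
    have hC : HasDerivAt (fun z => (u z) ^ 4) (4 * (u y) ^ 3 * deriv u y) y := by
      simpa using h1.fun_pow 4
    have := (hA.fun_sub hB).fun_sub hC
    refine this.congr_deriv ?_
    ring
  have hFlim : Tendsto F atTop (nhds 0) := by
    have h1 : Tendsto (fun y => (deriv u y) ^ 2) atTop (nhds 0) := by
      simpa using hu'0.pow 2
    have h2 : Tendsto (fun y => (u y) ^ 4) atTop (nhds 0) := by
      simpa using hu0.pow 4
    have := (h1.sub hxu).sub h2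
    simpa using this
  have hint' : IntegrableOn (fun t : ℝ => -(u t) ^ 2) (Ioi x) := (hint x).neg
  have key := integral_Ioi_of_hasDerivAt_of_tendsto'
    (f := F) (f' := fun t => -(u t) ^ 2) (a := x)
    (fun y _ => hder y) hint' hFlim
  have h0 : ∫ t in Ioi x, -(u t) ^ 2 = -∫ t in Ioi x, (u t) ^ 2 := by
    exact integral_neg _
  rw [h0] at key
  have : F x = ∫ t in Ioi x, (u t) ^ 2 := by linarith
  simp only [hF] at this
  linarith
end

section
/- Let u : ℝ → ℝ be twice continuously differentiable, satisfying u''(x) = x·u(x) + 2·u(x)³ for all real x, with u(x) → 0, u'(x) → 0 and x·u(x)² → 0 as x → ∞, and such that t ↦ u(t)² is integrable on (x, ∞) for every real x. If u is not identically zero, then u'(x) · u(x) < 0 for all x ≥ 0. In particular, u has no zero on [0, ∞). -/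
open MeasureTheory Filter Set

/-- Grönwall: a function with `|f'| ≤ K|f|` and `f a = 0` vanishes on `[a,b]`. -/
lemma gronwall_zero {f f' : ℝ → ℝ} {a b K : ℝ}
    (hf : ContinuousOn f (Icc a b))
    (hf' : ∀ x ∈ Ico a b, HasDerivAt f (f' x) x)
    (ha : f a = 0)
    (bound : ∀ x ∈ Ico a b, |f' x| ≤ K * |f x|) :
    ∀ x ∈ Icc a b, f x = 0 := by
  intro x hx
  have h := norm_le_gronwallBound_of_norm_deriv_right_le (δ := 0) (ε := 0) hf
    (fun y hy => (hf' y hy).hasDerivWithinAt) (by simp [ha])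
    (fun y hy => by simpa using bound y hy) x hx
  rw [gronwallBound_ε0_δ0] at h
  have h' : |f x| ≤ 0 := by simpa using h
  exact abs_eq_zero.mp (le_antisymm h' (abs_nonneg _))

/-- Grönwall with a continuous coefficient, for a nonnegative function. -/
lemma gronwall_zero' {f f' B : ℝ → ℝ} {a b : ℝ}
    (hf : ContinuousOn f (Icc a b)) (hB : ContinuousOn B (Icc a b))
    (hf' : ∀ x ∈ Ico a b, HasDerivAt f (f' x) x) (ha : f a = 0)
    (hnn : ∀ x ∈ Icc a b, 0 ≤ f x)
    (bound : ∀ x ∈ Ico a b, |f' x| ≤ B x * f x) :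
    ∀ x ∈ Icc a b, f x = 0 := by
  obtain ⟨K, hK⟩ := (isCompact_Icc (a := a) (b := b)).exists_bound_of_continuousOn hB
  apply gronwall_zero hf hf' ha
  intro x hx
  have hx' : x ∈ Icc a b := Ico_subset_Icc_self hx
  calc |f' x| ≤ B x * f x := bound x hx
    _ ≤ K * f x := by
        apply mul_le_mul_of_nonneg_right _ (hnn x hx')
        exact (le_abs_self _).trans (hK x hx')
    _ = K * |f x| := by rw [abs_of_nonneg (hnn x hx')]

/-- If a Painlevé II solution satisfies `u x₀ = u' x₀ = 0`, then `u ≡ 0`. -/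
lemma painleve_zero {u : ℝ → ℝ}
    (hd : Differentiable ℝ u) (hd' : Differentiable ℝ (deriv u))
    (hode : ∀ x : ℝ, deriv (deriv u) x = x * u x + 2 * (u x) ^ 3)
    {x₀ : ℝ} (h0 : u x₀ = 0) (h0' : deriv u x₀ = 0) : ∀ x, u x = 0 := by
  have hcu : Continuous u := hd.continuous
  have hcu' : Continuous (deriv u) := hd'.continuous
  have hw0 : u x₀ ^ 2 + deriv u x₀ ^ 2 = 0 := by rw [h0, h0']; ring
  have hwderiv : ∀ x : ℝ, HasDerivAt (fun x => u x ^ 2 + deriv u x ^ 2)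
      (2 * u x * deriv u x * (1 + x + 2 * u x ^ 2)) x := by
    intro x
    have h1 : HasDerivAt u (deriv u x) x := (hd x).hasDerivAt
    have h2 : HasDerivAt (deriv u) (x * u x + 2 * u x ^ 3) x := by
      rw [← hode x]; exact (hd' x).hasDerivAt
    have h3 : HasDerivAt (fun x => u x ^ 2 + deriv u x ^ 2) _ x := (h1.pow 2).add (h2.pow 2)
    convert h3 using 1
    push_cast
    ring
  have hwcont : Continuous (fun x => u x ^ 2 + deriv u x ^ 2) :=
    (hcu.pow 2).add (hcu'.pow 2)
  have habs : ∀ x : ℝ, |2 * u x * deriv u x| ≤ u x ^ 2 + deriv u x ^ 2 := by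
    intro x
    rw [abs_le]
    constructor
    · nlinarith [sq_nonneg (u x + deriv u x)]
    · nlinarith [sq_nonneg (u x - deriv u x)]
  have hwnn : ∀ x : ℝ, 0 ≤ u x ^ 2 + deriv u x ^ 2 := fun x => by positivity
  have fwd : ∀ b : ℝ, ∀ x ∈ Icc x₀ b, u x ^ 2 + deriv u x ^ 2 = 0 := by
    intro b
    apply gronwall_zero' (B := fun x => |1 + x + 2 * u x ^ 2|)
      hwcont.continuousOn
      ((by fun_prop : Continuous fun x => |1 + x + 2 * u x ^ 2|).continuousOn)
      (fun y _ => hwderiv y) hw0 (fun y _ => hwnn y)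
    intro y _
    calc |2 * u y * deriv u y * (1 + y + 2 * u y ^ 2)|
        = |2 * u y * deriv u y| * |1 + y + 2 * u y ^ 2| := abs_mul _ _
      _ ≤ (u y ^ 2 + deriv u y ^ 2) * |1 + y + 2 * u y ^ 2| :=
          mul_le_mul_of_nonneg_right (habs y) (abs_nonneg _)
      _ = |1 + y + 2 * u y ^ 2| * (u y ^ 2 + deriv u y ^ 2) := by ring
  have bwd : ∀ b : ℝ, ∀ x ∈ Icc b x₀, u x ^ 2 + deriv u x ^ 2 = 0 := by
    intro b x hx
    have key : ∀ y ∈ Icc x₀ (2 * x₀ - b),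
        u (2 * x₀ - y) ^ 2 + deriv u (2 * x₀ - y) ^ 2 = 0 := by
      apply gronwall_zero'
        (f' := fun y => -(2 * u (2 * x₀ - y) * deriv u (2 * x₀ - y) *
          (1 + (2 * x₀ - y) + 2 * u (2 * x₀ - y) ^ 2)))
        (B := fun y => |1 + (2 * x₀ - y) + 2 * u (2 * x₀ - y) ^ 2|)
      · exact (hwcont.comp (continuous_const.sub continuous_id)).continuousOn
      · apply Continuous.continuousOn
        exact continuous_abs.comp ((continuous_const.add
          (continuous_const.sub continuous_id)).add
          (continuous_const.mul ((hcu.comp (continuous_const.sub continuous_id)).pow 2)))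
      · intro y _
        have hcomp : HasDerivAt (fun x : ℝ => 2 * x₀ - x) (-1) y := by
          simpa using (hasDerivAt_id y).const_sub (2 * x₀)
        have h3 : HasDerivAt (fun y => u (2 * x₀ - y) ^ 2 + deriv u (2 * x₀ - y) ^ 2) _ y :=
          (hwderiv (2 * x₀ - y)).comp y hcomp
        convert h3 using 1
        ring
      · have he : 2 * x₀ - x₀ = x₀ := by ring
        rw [he]; exact hw0
      · intro y _; exact hwnn _
      · intro y _
        rw [abs_neg]
        calc |2 * u (2 * x₀ - y) * deriv u (2 * x₀ - y) *
            (1 + (2 * x₀ - y) + 2 * u (2 * x₀ - y) ^ 2)|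
            = |2 * u (2 * x₀ - y) * deriv u (2 * x₀ - y)| *
              |1 + (2 * x₀ - y) + 2 * u (2 * x₀ - y) ^ 2| := abs_mul _ _
          _ ≤ (u (2 * x₀ - y) ^ 2 + deriv u (2 * x₀ - y) ^ 2) *
              |1 + (2 * x₀ - y) + 2 * u (2 * x₀ - y) ^ 2| :=
              mul_le_mul_of_nonneg_right (habs _) (abs_nonneg _)
          _ = |1 + (2 * x₀ - y) + 2 * u (2 * x₀ - y) ^ 2| *
              (u (2 * x₀ - y) ^ 2 + deriv u (2 * x₀ - y) ^ 2) := by ring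
    have hx' : 2 * x₀ - x ∈ Icc x₀ (2 * x₀ - b) := by
      constructor
      · linarith [hx.2]
      · linarith [hx.1]
    have h4 := key (2 * x₀ - x) hx'
    simpa [show 2 * x₀ - (2 * x₀ - x) = x by ring] using h4
  intro x
  have hwx : u x ^ 2 + deriv u x ^ 2 = 0 := by
    rcases le_total x₀ x with h | h
    · exact fwd x x ⟨h, le_rfl⟩
    · exact bwd x x ⟨le_rfl, h⟩
  nlinarith [sq_nonneg (u x), sq_nonneg (deriv u x)]

/-- Blow-up: if at some `x₀ ≥ 0` we have `u x₀ > 0` and `u' x₀ > 0`, then `u` cannot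
tend to `0` at `+∞`. -/
lemma painleve_blowup {u : ℝ → ℝ}
    (hd : Differentiable ℝ u) (hd' : Differentiable ℝ (deriv u))
    (hode : ∀ x : ℝ, deriv (deriv u) x = x * u x + 2 * (u x) ^ 3)
    (hu0 : Tendsto u atTop (nhds 0))
    {x₀ : ℝ} (hx₀ : 0 ≤ x₀) (h1 : 0 < u x₀) (h2 : 0 < deriv u x₀) : False := by
  have hcu : Continuous u := hd.continuous
  -- Step 1: u > 0 on [x₀, ∞)
  have pos : ∀ x, x₀ ≤ x → 0 < u x := by
    by_contra h
    push_neg at h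
    obtain ⟨b, hb, hub⟩ := h
    have hzero : ∃ z ∈ Icc x₀ b, u z = 0 := by
      have h5 := intermediate_value_Icc' hb hcu.continuousOn (a := x₀) (b := b)
      have h0mem : (0 : ℝ) ∈ Icc (u b) (u x₀) := ⟨hub, le_of_lt h1⟩
      obtain ⟨z, hz, hz0⟩ := h5 h0mem
      exact ⟨z, hz, hz0⟩
    set Z : Set ℝ := Icc x₀ b ∩ u ⁻¹' {0} with hZ_def
    have hZclosed : IsClosed Z :=
      isClosed_Icc.inter (isClosed_singleton.preimage hcu)
    have hZne : Z.Nonempty := by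
      obtain ⟨z, hz, hz0⟩ := hzero; exact ⟨z, hz, hz0⟩
    have hZbdd : BddBelow Z := ⟨x₀, fun t ht => ht.1.1⟩
    set c := sInf Z with hc_def
    have hcZ : c ∈ Z := hZclosed.csInf_mem hZne hZbdd
    have hcIcc : c ∈ Icc x₀ b := hcZ.1
    have hc0 : u c = 0 := hcZ.2
    have hx₀c : x₀ < c := by
      rcases lt_or_eq_of_le hcIcc.1 with h | h
      · exact h
      · exact absurd (h ▸ hc0) (ne_of_gt h1)
    have upos : ∀ t ∈ Ico x₀ c, 0 < u t := by
      intro t ht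
      by_contra hle
      push_neg at hle
      obtain ⟨z, hz, hz0⟩ := intermediate_value_Icc' ht.1 hcu.continuousOn
        (a := x₀) (b := t) ⟨hle, le_of_lt h1⟩
      have hzZ : z ∈ Z := ⟨⟨hz.1, hz.2.trans ((le_of_lt ht.2).trans hcIcc.2)⟩, hz0⟩
      have h6 : c ≤ z := csInf_le hZbdd hzZ
      exact absurd (lt_of_le_of_lt (h6.trans hz.2) ht.2) (lt_irrefl _)
    have unn : ∀ t ∈ Icc x₀ c, 0 ≤ u t := by
      intro t ht
      rcases lt_or_eq_of_le ht.2 with h | h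
      · exact le_of_lt (upos t ⟨ht.1, h⟩)
      · rw [h, hc0]
    have mono' : MonotoneOn (deriv u) (Icc x₀ c) := by
      apply monotoneOn_of_deriv_nonneg (convex_Icc _ _)
        hd'.continuous.continuousOn hd'.differentiableOn
      intro t ht
      rw [interior_Icc] at ht
      rw [hode t]
      have hut : 0 ≤ u t := unn t ⟨le_of_lt ht.1, le_of_lt ht.2⟩
      have htpos : 0 ≤ t := hx₀.trans (le_of_lt ht.1)
      have hm := mul_nonneg htpos hut
      have hp := pow_nonneg hut 3
      linarith
    have u'pos : ∀ t ∈ Icc x₀ c, 0 < deriv u t := by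
      intro t ht
      exact lt_of_lt_of_le h2 (mono' ⟨le_rfl, le_of_lt hx₀c⟩ ht ht.1)
    have strict : StrictMonoOn u (Icc x₀ c) := by
      apply strictMonoOn_of_deriv_pos (convex_Icc _ _) hcu.continuousOn
      intro t ht
      rw [interior_Icc] at ht
      exact u'pos t ⟨le_of_lt ht.1, le_of_lt ht.2⟩
    have h7 : u x₀ < u c := strict ⟨le_rfl, le_of_lt hx₀c⟩
      ⟨le_of_lt hx₀c, le_rfl⟩ hx₀c
    rw [hc0] at h7
    linarith
  -- Step 2: u' monotone on [x₀, ∞), so u monotone, so u ≥ u x₀ > 0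
  have mono' : MonotoneOn (deriv u) (Ici x₀) := by
    apply monotoneOn_of_deriv_nonneg (convex_Ici _)
      hd'.continuous.continuousOn hd'.differentiableOn
    intro t ht
    rw [interior_Ici] at ht
    rw [hode t]
    have hut : 0 ≤ u t := le_of_lt (pos t (le_of_lt ht))
    have htpos : 0 ≤ t := hx₀.trans (le_of_lt ht)
    have hm := mul_nonneg htpos hut
    have hp := pow_nonneg hut 3
    linarith
  have monoU : MonotoneOn u (Ici x₀) := by
    apply monotoneOn_of_deriv_nonneg (convex_Ici _)
      hcu.continuousOn hd.differentiableOn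
    intro t ht
    rw [interior_Ici] at ht
    exact le_of_lt (lt_of_lt_of_le h2 (mono' self_mem_Ici (mem_Ici.mpr (le_of_lt ht)) (le_of_lt ht)))
  have hev : ∀ᶠ x in atTop, u x < u x₀ := hu0.eventually_lt_const h1
  obtain ⟨x, hx1, hx2⟩ := (hev.and (eventually_ge_atTop x₀)).exists
  exact absurd (monoU self_mem_Ici hx2 hx2) (not_le.mpr hx1)

/-- Key case analysis: at `x₀ ≥ 0`, we cannot have `u x₀ ≥ 0` and `u' x₀ ≥ 0`
unless both vanish. -/
lemma painleve_no_nonneg_pair {u : ℝ → ℝ}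
    (hd : Differentiable ℝ u) (hd' : Differentiable ℝ (deriv u))
    (hode : ∀ x : ℝ, deriv (deriv u) x = x * u x + 2 * (u x) ^ 3)
    (hu0 : Tendsto u atTop (nhds 0))
    {x₀ : ℝ} (hx₀ : 0 ≤ x₀) (h1 : 0 ≤ u x₀) (h2 : 0 ≤ deriv u x₀)
    (hnz : ¬(u x₀ = 0 ∧ deriv u x₀ = 0)) : False := by
  rcases lt_or_eq_of_le h1 with h1' | h1'
  · rcases lt_or_eq_of_le h2 with h2' | h2'
    · exact painleve_blowup hd hd' hode hu0 hx₀ h1' h2'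
    · -- u x₀ > 0, u' x₀ = 0 : u'' x₀ > 0, so u' > 0 just to the right
      have hd2pos : 0 < x₀ * u x₀ + 2 * (u x₀) ^ 3 := by
        have hm := mul_nonneg hx₀ (le_of_lt h1')
        have hp := pow_pos h1' 3
        linarith
      have hD : HasDerivAt (deriv u) (x₀ * u x₀ + 2 * (u x₀) ^ 3) x₀ := by
        rw [← hode x₀]; exact (hd' x₀).hasDerivAt
      have hslope : Tendsto (slope (deriv u) x₀) (nhdsWithin x₀ (Ioi x₀))
          (nhds (x₀ * u x₀ + 2 * (u x₀) ^ 3)) :=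
        (hasDerivAt_iff_tendsto_slope.mp hD).mono_left
          (nhdsWithin_mono _ (fun y hy => ne_of_gt hy))
      have ev1 : ∀ᶠ y in nhdsWithin x₀ (Ioi x₀), 0 < slope (deriv u) x₀ y :=
        hslope.eventually_const_lt hd2pos
      have ev2 : ∀ᶠ y in nhdsWithin x₀ (Ioi x₀), 0 < u y :=
        ((hd.continuous.tendsto x₀).eventually_const_lt h1').filter_mono
          nhdsWithin_le_nhds
      have ev3 : ∀ᶠ y in nhdsWithin x₀ (Ioi x₀), x₀ < y :=
        eventually_mem_nhdsWithin
      obtain ⟨y, hs, hu, hy⟩ := (ev1.and (ev2.and ev3)).exists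
      have hyne : y - x₀ ≠ 0 := ne_of_gt (sub_pos.mpr hy)
      have h8 : 0 < deriv u y - deriv u x₀ := by
        have h9 := mul_pos hs (sub_pos.mpr hy)
        rwa [slope_def_field, div_mul_cancel₀ _ hyne] at h9
      rw [← h2'] at h8
      simp only [sub_zero] at h8
      exact painleve_blowup hd hd' hode hu0 (hx₀.trans (le_of_lt hy)) hu h8
  · rcases lt_or_eq_of_le h2 with h2' | h2'
    · -- u x₀ = 0, u' x₀ > 0 : u > 0 just to the right
      have ev : ∀ᶠ y in nhds x₀, 0 < deriv u y :=
        (hd'.continuous.tendsto x₀).eventually_const_lt h2'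
      obtain ⟨ε, hε, hball⟩ := Metric.eventually_nhds_iff.mp ev
      have hx₀x₁ : x₀ < x₀ + ε / 2 := by linarith
      have hIcc : ∀ y ∈ Icc x₀ (x₀ + ε / 2), 0 < deriv u y := by
        intro y hy
        apply hball
        rw [Real.dist_eq, abs_lt]
        constructor
        · linarith [hy.1]
        · linarith [hy.2]
      have strict : StrictMonoOn u (Icc x₀ (x₀ + ε / 2)) := by
        apply strictMonoOn_of_deriv_pos (convex_Icc _ _) hd.continuous.continuousOn
        intro t ht
        rw [interior_Icc] at ht
        exact hIcc t ⟨le_of_lt ht.1, le_of_lt ht.2⟩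
      have hu1 : 0 < u (x₀ + ε / 2) := by
        have h10 := strict ⟨le_rfl, le_of_lt hx₀x₁⟩ ⟨le_of_lt hx₀x₁, le_rfl⟩ hx₀x₁
        rw [← h1'] at h10
        linarith
      exact painleve_blowup hd hd' hode hu0 (hx₀.trans (le_of_lt hx₀x₁)) hu1
        (hIcc _ ⟨le_of_lt hx₀x₁, le_rfl⟩)
    · exact hnz ⟨h1'.symm, h2'.symm⟩

/-- For a nonzero solution of Painlevé II with the given boundary conditions,
`u'(x)·u(x) < 0` for all `x ≥ 0`; in particular, `u` has no zero on `[0, ∞)`. -/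
theorem painleve_sign_claim (u : ℝ → ℝ) (hu : ContDiff ℝ 2 u)
    (hode : ∀ x : ℝ, deriv (deriv u) x = x * u x + 2 * (u x) ^ 3)
    (hu0 : Tendsto u atTop (nhds 0))
    (hu'0 : Tendsto (deriv u) atTop (nhds 0))
    (hxu : Tendsto (fun x : ℝ => x * (u x) ^ 2) atTop (nhds 0))
    (hint : ∀ x : ℝ, IntegrableOn (fun t : ℝ => (u t) ^ 2) (Ioi x))
    (hne : ¬ ∀ x : ℝ, u x = 0) :
    (∀ x : ℝ, 0 ≤ x → deriv u x * u x < 0) ∧ (∀ x : ℝ, 0 ≤ x → u x ≠ 0) := by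
  have hu2 : ContDiff ℝ (1 + 1) u := by exact_mod_cast hu
  have hd : Differentiable ℝ u := hu.differentiable (by norm_num)
  have hd' : Differentiable ℝ (deriv u) :=
    ((contDiff_succ_iff_deriv.mp hu2).2.2).differentiable one_ne_zero
  have hnz : ∀ x : ℝ, ¬(u x = 0 ∧ deriv u x = 0) := by
    intro x hx
    exact hne (painleve_zero hd hd' hode hx.1 hx.2)
  -- negated solution
  have hdv : Differentiable ℝ (fun x => -u x) := hd.neg
  have hvderiv : deriv (fun x => -u x) = fun x => -deriv u x :=
    funext fun x => deriv.neg
  have hdv' : Differentiable ℝ (deriv (fun x => -u x)) := by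
    rw [hvderiv]; exact hd'.neg
  have hodev : ∀ x : ℝ, deriv (deriv (fun x => -u x)) x
      = x * (-u x) + 2 * (-u x) ^ 3 := by
    intro x
    rw [hvderiv]
    have h11 : deriv (fun x => -deriv u x) x = -deriv (deriv u) x := deriv.neg
    rw [h11, hode x]
    ring
  have hv0 : Tendsto (fun x => -u x) atTop (nhds 0) := by
    have h12 := hu0.neg
    rwa [neg_zero] at h12
  have hnpv : ∀ x : ℝ, 0 ≤ x → 0 ≤ -u x → 0 ≤ -deriv u x → False := by
    intro x hx h1v h2v
    apply painleve_no_nonneg_pair hdv hdv' hodev hv0 hx h1v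
      (by rw [hvderiv]; exact h2v)
    intro ⟨ha, hb⟩
    rw [hvderiv] at hb
    simp only [neg_eq_zero] at ha hb
    exact hnz x ⟨ha, hb⟩
  have hnpu : ∀ x : ℝ, 0 ≤ x → 0 ≤ u x → 0 ≤ deriv u x → False := by
    intro x hx h1u h2u
    exact painleve_no_nonneg_pair hd hd' hode hu0 hx h1u h2u (hnz x)
  have main : ∀ x : ℝ, 0 ≤ x → deriv u x * u x < 0 := by
    intro x hx
    rcases lt_trichotomy (u x) 0 with hux | hux | hux
    · rcases le_or_gt (deriv u x) 0 with hdx | hdx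
      · exact absurd (hnpv x hx (by linarith) (by linarith)) id
      · exact mul_neg_of_pos_of_neg hdx hux
    · exfalso
      rcases le_or_gt (deriv u x) 0 with hdx | hdx
      · exact hnpv x hx (by linarith) (by linarith)
      · exact hnpu x hx (le_of_eq hux.symm) (le_of_lt hdx)
    · rcases le_or_gt 0 (deriv u x) with hdx | hdx
      · exact absurd (hnpu x hx (le_of_lt hux) hdx) id
      · exact mul_neg_of_neg_of_pos hdx hux
  refine ⟨main, fun x hx hzero => ?_⟩
  have h13 := main x hx
  rw [hzero, mul_zero] at h13
  exact lt_irrefl 0 h13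
end

section
/- Let u : ℝ → ℝ be twice continuously differentiable, satisfying u''(x) = x·u(x) + 2·u(x)³ for all real x, with u(x) → 0, u'(x) → 0 and x·u(x)² → 0 as x → ∞, and such that t ↦ u(t)² is integrable on (x, ∞) for every real x. If moreover u(x) > 0 and u'(x) < 0 for all x ≥ 0, then h(x) ≤ u(x)² for all x ≥ 1/4, where h(x) = ∫ₓ^∞ u(t)² dt. -/
open MeasureTheory Filter Set

/-- For the positive decreasing solution of Painlevé II with the given boundary
conditions, `h(x) ≤ u(x)²` for all `x ≥ 1/4`, where `h(x) = ∫ₓ^∞ u(t)² dt`. -/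
theorem painleve_h_le_u_sq (u : ℝ → ℝ) (hu : ContDiff ℝ 2 u)
    (hode : ∀ x : ℝ, deriv (deriv u) x = x * u x + 2 * (u x) ^ 3)
    (hu0 : Tendsto u atTop (nhds 0))
    (hu'0 : Tendsto (deriv u) atTop (nhds 0))
    (hxu : Tendsto (fun x : ℝ => x * (u x) ^ 2) atTop (nhds 0))
    (hint : ∀ x : ℝ, IntegrableOn (fun t : ℝ => (u t) ^ 2) (Ioi x))
    (hupos : ∀ x : ℝ, 0 ≤ x → 0 < u x)
    (hu'neg : ∀ x : ℝ, 0 ≤ x → deriv u x < 0) :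
    ∀ x : ℝ, (1 / 4 : ℝ) ≤ x → (∫ t in Ioi x, (u t) ^ 2) ≤ (u x) ^ 2 := by
  have hud : Differentiable ℝ u := hu.differentiable (by norm_num)
  have hu2 : ContDiff ℝ (1 + 1 : ℕ) u := by exact_mod_cast hu
  have hu' : ContDiff ℝ 1 (deriv u) := (contDiff_succ_iff_deriv.mp hu2).2.2
  have hu'd : Differentiable ℝ (deriv u) := hu'.differentiable (by norm_num)
  set F : ℝ → ℝ := fun x => (deriv u x) ^ 2 - x * (u x) ^ 2 - (u x) ^ 4 with hFdef
  have hFderiv : ∀ x : ℝ, HasDerivAt F (-(u x) ^ 2) x := by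
    intro x
    have h1 : HasDerivAt u (deriv u x) x := (hud x).hasDerivAt
    have h2 : HasDerivAt (deriv u) (deriv (deriv u) x) x := (hu'd x).hasDerivAt
    have h3 := ((h2.pow 2).sub ((hasDerivAt_id x).mul (h1.pow 2))).sub (h1.pow 4)
    refine (h3 : HasDerivAt F _ x).congr_deriv ?_
    rw [hode]
    simp only [id, Pi.pow_apply]
    push_cast
    ring
  have hF0 : Tendsto F atTop (nhds 0) := by
    have h1 : Tendsto (fun x => (deriv u x) ^ 2) atTop (nhds 0) := by
      have := hu'0.pow 2
      simpa using this
    have h3 : Tendsto (fun x => (u x) ^ 4) atTop (nhds 0) := by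
      have := hu0.pow 4
      simpa using this
    have := (h1.sub hxu).sub h3
    simpa using this
  have hFeq : ∀ x : ℝ, (∫ t in Ioi x, (u t) ^ 2) = F x := by
    intro x
    have h := integral_Ioi_of_hasDerivAt_of_tendsto
      (f := F) (f' := fun t => -(u t) ^ 2) (a := x) (m := 0)
      ((hFderiv x).continuousAt.continuousWithinAt)
      (fun t _ => hFderiv t) ((hint x).neg) hF0
    have h2 : (∫ t in Ioi x, -(u t) ^ 2) = - ∫ t in Ioi x, (u t) ^ 2 := by
      simpa using integral_neg (μ := volume.restrict (Ioi x)) (fun t => (u t) ^ 2)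
    rw [h2] at h
    linarith [h]
  have hFnonneg : ∀ x : ℝ, 0 ≤ F x := by
    intro x
    rw [← hFeq x]
    exact setIntegral_nonneg measurableSet_Ioi (fun t _ => sq_nonneg _)
  -- key: on [1/4, ∞), -(u x)^2 - 2 * u x * deriv u x ≥ 0
  have hkey : ∀ x : ℝ, (1 / 4 : ℝ) ≤ x → 0 ≤ -(u x) ^ 2 - 2 * u x * deriv u x := by
    intro x hx
    have hx0 : (0 : ℝ) ≤ x := by linarith
    have h1 : 0 < u x := hupos x hx0
    have h2 : deriv u x < 0 := hu'neg x hx0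
    have h3 : 0 ≤ F x := hFnonneg x
    have h4 : (1 / 4 : ℝ) * (u x) ^ 2 ≤ x * (u x) ^ 2 :=
      mul_le_mul_of_nonneg_right hx (sq_nonneg _)
    have h5 : (1 / 4 : ℝ) * (u x) ^ 2 ≤ (deriv u x) ^ 2 := by
      simp only [hFdef] at h3
      nlinarith [pow_pos h1 4]
    nlinarith [mul_pos h1 h1, mul_pos h1 (neg_pos.mpr h2)]
  set g : ℝ → ℝ := fun x => F x - (u x) ^ 2 with hgdef
  have hgderiv : ∀ x : ℝ, HasDerivAt g (-(u x) ^ 2 - 2 * u x * deriv u x) x := by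
    intro x
    have h1 : HasDerivAt u (deriv u x) x := (hud x).hasDerivAt
    have := (hFderiv x).sub (h1.pow 2)
    refine (this : HasDerivAt g _ x).congr_deriv ?_
    push_cast
    ring
  have hg0 : Tendsto g atTop (nhds 0) := by
    have h3 : Tendsto (fun x => (u x) ^ 2) atTop (nhds 0) := by
      have := hu0.pow 2
      simpa using this
    have := hF0.sub h3
    simpa using this
  have hgmono : MonotoneOn g (Ici (1 / 4 : ℝ)) := by
    apply monotoneOn_of_deriv_nonneg (convex_Ici _)
    · exact fun x _ => (hgderiv x).continuousAt.continuousWithinAt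
    · exact fun x _ => ((hgderiv x).differentiableAt).differentiableWithinAt
    · intro x hx
      rw [interior_Ici] at hx
      rw [(hgderiv x).deriv]
      exact hkey x (le_of_lt hx)
  intro x hx
  have hgle : g x ≤ 0 := by
    refine ge_of_tendsto hg0 ?_
    filter_upwards [eventually_ge_atTop x] with y hy
    exact hgmono hx (le_trans hx hy) hy
  rw [hFeq x]
  simp only [hgdef] at hgle
  linarith
end

section
/- Let u : ℝ → ℝ be twice continuously differentiable, satisfying u''(x) = x·u(x) + 2·u(x)³ for all real x, with u(x) → 0, u'(x) → 0 and x·u(x)² → 0 as x → ∞, and such that t ↦ u(t)² is integrable on (x, ∞) for every real x; suppose u(x) > 0 for all x ≥ 0. Define h(x) = ∫ₓ^∞ u(t)² dt and g(x) = h(x)² + 2·(u'(x)/u(x))·h(x) + u(x)². Then for every x ≥ 0, the derivative of g at x equals -2·h(x)²/u(x)². -/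
open MeasureTheory Filter Set

/-- For a positive solution of Painlevé II with the given boundary conditions, the
function `g(x) = h(x)² + 2·(u'(x)/u(x))·h(x) + u(x)²` has derivative
`-2·h(x)²/u(x)²` at every `x ≥ 0`, where `h(x) = ∫ₓ^∞ u(t)² dt`. -/
theorem painleve_g_deriv (u : ℝ → ℝ) (hu : ContDiff ℝ 2 u)
    (hode : ∀ x : ℝ, deriv (deriv u) x = x * u x + 2 * (u x) ^ 3)
    (hu0 : Tendsto u atTop (nhds 0))
    (hu'0 : Tendsto (deriv u) atTop (nhds 0))
    (hxu : Tendsto (fun x : ℝ => x * (u x) ^ 2) atTop (nhds 0))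
    (hint : ∀ x : ℝ, IntegrableOn (fun t : ℝ => (u t) ^ 2) (Ioi x))
    (hupos : ∀ x : ℝ, 0 ≤ x → 0 < u x) :
    ∀ x : ℝ, 0 ≤ x →
      HasDerivAt
        (fun y : ℝ => (∫ t in Ioi y, (u t) ^ 2) ^ 2 +
          2 * (deriv u y / u y) * (∫ t in Ioi y, (u t) ^ 2) + (u y) ^ 2)
        (-2 * (∫ t in Ioi x, (u t) ^ 2) ^ 2 / (u x) ^ 2) x := by
  set h : ℝ → ℝ := fun y => ∫ t in Ioi y, (u t) ^ 2 with hh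
  have hcont : Continuous fun t : ℝ => (u t) ^ 2 := (hu.continuous).pow 2
  have hII : ∀ a b : ℝ, IntervalIntegrable (fun t => (u t) ^ 2) volume a b :=
    fun a b => hcont.intervalIntegrable a b
  -- split lemma
  have hsplit_le : ∀ a b : ℝ, a ≤ b →
      h a = (∫ t in a..b, (u t) ^ 2) + h b := by
    intro a b hab
    have : Ioi a = Ioc a b ∪ Ioi b := (Ioc_union_Ioi_eq_Ioi hab).symm
    rw [hh]
    simp only
    rw [this, setIntegral_union (Ioc_disjoint_Ioi le_rfl) measurableSet_Ioi
      ((hint a).mono_set Ioc_subset_Ioi_self) (hint b),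
      intervalIntegral.integral_of_le hab]
  have hsplit : ∀ y : ℝ, h y = h 0 - ∫ t in (0:ℝ)..y, (u t) ^ 2 := by
    intro y
    rcases le_total 0 y with hy | hy
    · rw [hsplit_le 0 y hy]; ring
    · rw [hsplit_le y 0 hy, intervalIntegral.integral_symm]; ring
  have hH : ∀ y : ℝ, HasDerivAt h (-(u y) ^ 2) y := by
    intro y
    have h1 : HasDerivAt (fun z : ℝ => ∫ t in (0:ℝ)..z, (u t) ^ 2) ((u y) ^ 2) y :=
      intervalIntegral.integral_hasDerivAt_right (hII 0 y)
        (hcont.stronglyMeasurableAtFilter _ _) hcont.continuousAt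
    have h2 : HasDerivAt (fun z : ℝ => h 0 - ∫ t in (0:ℝ)..z, (u t) ^ 2) (-(u y) ^ 2) y := by
      simpa using (hasDerivAt_const y (h 0)).fun_sub h1
    exact h2.congr_of_eventuallyEq (Eventually.of_forall fun z => hsplit z)
  -- h tends to 0
  have hh0 : Tendsto h atTop (nhds 0) := by
    have := intervalIntegral_tendsto_integral_Ioi 0 (hint 0) (tendsto_id (α := ℝ))
    have : Tendsto (fun y => h 0 - ∫ t in (0:ℝ)..y, (u t) ^ 2) atTop (nhds (h 0 - h 0)) :=
      tendsto_const_nhds.sub this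
    simp only [sub_self] at this
    exact this.congr fun y => (hsplit y).symm
  -- differentiability facts
  have hud : Differentiable ℝ u := hu.differentiable (by norm_num)
  have hu'd : Differentiable ℝ (deriv u) :=
    (hu.iterate_deriv' 1 1).differentiable (by norm_num)
  have hu' : ∀ y : ℝ, HasDerivAt u (deriv u y) y := fun y => (hud y).hasDerivAt
  have hu'' : ∀ y : ℝ, HasDerivAt (deriv u) (y * u y + 2 * (u y) ^ 3) y := by
    intro y
    have := (hu'd y).hasDerivAt
    rwa [hode y] at this
  -- energy identity
  have key : ∀ y : ℝ, (deriv u y) ^ 2 = y * (u y) ^ 2 + (u y) ^ 4 + h y := by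
    set F : ℝ → ℝ := fun y => (deriv u y) ^ 2 - y * (u y) ^ 2 - (u y) ^ 4 - h y with hF
    have hF' : ∀ y : ℝ, HasDerivAt F 0 y := by
      intro y
      have d1 : HasDerivAt (fun z => (deriv u z) ^ 2)
          (2 * (deriv u y) * (y * u y + 2 * (u y) ^ 3)) y := by
        simpa [mul_comm] using ((hu'' y).fun_pow 2)
      have d2 : HasDerivAt (fun z => z * (u z) ^ 2)
          ((u y) ^ 2 + y * (2 * u y * deriv u y)) y := by
        have := (hasDerivAt_id y).fun_mul ((hu' y).fun_pow 2)
        simpa [pow_two, mul_comm, mul_assoc, mul_left_comm] using this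
      have d3 : HasDerivAt (fun z => (u z) ^ 4) (4 * (u y) ^ 3 * deriv u y) y := by
        simpa [mul_comm] using ((hu' y).fun_pow 4)
      have := ((d1.fun_sub d2).fun_sub d3).fun_sub (hH y)
      convert this using 1
      · rfl
      · rfl
      ring
    have hconst : ∀ y : ℝ, F y = F 0 := by
      intro y
      have : ∀ z : ℝ, deriv F z = 0 := fun z => (hF' z).deriv
      exact is_const_of_deriv_eq_zero (fun z => (hF' z).differentiableAt) this y 0
    have hFtend : Tendsto F atTop (nhds 0) := by
      have t1 : Tendsto (fun y => (deriv u y) ^ 2) atTop (nhds 0) := by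
        simpa using (hu'0.pow 2)
      have t3 : Tendsto (fun y => (u y) ^ 4) atTop (nhds 0) := by
        simpa using (hu0.pow 4)
      have := ((t1.sub hxu).sub t3).sub hh0
      simpa using this
    have hF0 : F 0 = 0 := by
      have : Tendsto F atTop (nhds (F 0)) := by
        rw [show F = fun _ => F 0 from funext hconst]; exact tendsto_const_nhds
      exact tendsto_nhds_unique this hFtend
    intro y
    have := hconst y
    rw [hF0] at this
    simp only [hF] at this
    linarith
  -- main computation
  intro x hx
  have hne : u x ≠ 0 := ne_of_gt (hupos x hx)
  have dH := hH x
  have dsq : HasDerivAt (fun y => h y ^ 2) (2 * h x * (-(u x) ^ 2)) x := by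
    simpa [mul_comm] using dH.fun_pow 2
  have ddiv : HasDerivAt (fun y => deriv u y / u y)
      (((x * u x + 2 * (u x) ^ 3) * u x - deriv u x * deriv u x) / (u x) ^ 2) x :=
    (hu'' x).div (hu' x) hne
  have dmul : HasDerivAt (fun y => 2 * (deriv u y / u y) * h y)
      (2 * (((x * u x + 2 * (u x) ^ 3) * u x - deriv u x * deriv u x) / (u x) ^ 2) * h x
        + 2 * (deriv u x / u x) * (-(u x) ^ 2)) x :=
    ((ddiv.const_mul 2).mul dH)
  have dusq : HasDerivAt (fun y => (u y) ^ 2) (2 * u x * deriv u x) x := by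
    simpa [mul_comm] using (hu' x).fun_pow 2
  have total := (dsq.fun_add dmul).fun_add dusq
  convert total using 1
  · rfl
  · rfl
  have hk := key x
  have hxint : (∫ t in Ioi x, (u t) ^ 2) = h x := rfl
  rw [hxint]
  field_simp
  ring_nf
  linear_combination (h x) * hk
end

section
/- Let u : ℝ → ℝ be twice continuously differentiable, satisfying u''(x) = x·u(x) + 2·u(x)³ for all real x, with u(x) → 0, u'(x) → 0 and x·u(x)² → 0 as x → ∞, and such that t ↦ u(t)² is integrable on (x, ∞) for every real x. Suppose u(x) > 0 and u'(x) < 0 for all x ≥ 0, and that √x · h(x) → 0 as x → ∞, where h(x) = ∫ₓ^∞ u(t)² dt. Then for every x ≥ 0: u(x)²·h(x)² + 2·u(x)·u'(x)·h(x) + u(x)⁴ > 0. -/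
open MeasureTheory Filter Set

/-- The key positivity: for the positive decreasing solution of Painlevé II with the
decay `√x·h(x) → 0`, one has `u(x)²·h(x)² + 2·u(x)·u'(x)·h(x) + u(x)⁴ > 0` for all
`x ≥ 0`, where `h(x) = ∫ₓ^∞ u(t)² dt`. -/
theorem painleve_positivity (u : ℝ → ℝ) (hu : ContDiff ℝ 2 u)
    (hode : ∀ x : ℝ, deriv (deriv u) x = x * u x + 2 * (u x) ^ 3)
    (hu0 : Tendsto u atTop (nhds 0))
    (hu'0 : Tendsto (deriv u) atTop (nhds 0))
    (hxu : Tendsto (fun x : ℝ => x * (u x) ^ 2) atTop (nhds 0))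
    (hint : ∀ x : ℝ, IntegrableOn (fun t : ℝ => (u t) ^ 2) (Ioi x))
    (hupos : ∀ x : ℝ, 0 ≤ x → 0 < u x)
    (hu'neg : ∀ x : ℝ, 0 ≤ x → deriv u x < 0)
    (hdecay : Tendsto (fun x : ℝ => Real.sqrt x * ∫ t in Ioi x, (u t) ^ 2)
      atTop (nhds 0)) :
    ∀ x : ℝ, 0 ≤ x →
      0 < (u x) ^ 2 * (∫ t in Ioi x, (u t) ^ 2) ^ 2 +
        2 * u x * deriv u x * (∫ t in Ioi x, (u t) ^ 2) + (u x) ^ 4 := by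
  have hucont : Continuous u := hu.continuous
  have hu2cont : Continuous (fun t : ℝ => (u t) ^ 2) := hucont.pow 2
  have hu'cont : Continuous (deriv u) := hu.continuous_deriv (by norm_num)
  set h : ℝ → ℝ := fun x => ∫ t in Ioi x, (u t) ^ 2 with hhdef
  -- splitting identity
  have hsplit : ∀ a b : ℝ, a ≤ b → h a = (∫ t in a..b, (u t) ^ 2) + h b := by
    intro a b hab
    rw [intervalIntegral.integral_of_le hab]
    rw [hhdef]
    simp only
    rw [← setIntegral_union (Set.Ioc_disjoint_Ioi le_rfl) measurableSet_Ioi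
      ((hint a).mono_set Ioc_subset_Ioi_self) (hint b)]
    rw [Set.Ioc_union_Ioi_eq_Ioi hab]
  have hid : ∀ a z : ℝ, h z = h a - ∫ t in a..z, (u t) ^ 2 := by
    intro a z
    rcases le_total a z with hz | hz
    · have := hsplit a z hz; linarith
    · have := hsplit z a hz
      rw [intervalIntegral.integral_symm] at this
      linarith
  -- h is differentiable with derivative -u²
  have hderiv : ∀ x : ℝ, HasDerivAt h (-(u x) ^ 2) x := by
    intro x
    have key : HasDerivAt (fun z => ∫ t in (x - 1)..z, (u t) ^ 2) ((u x) ^ 2) x :=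
      intervalIntegral.integral_hasDerivAt_right
        (hu2cont.intervalIntegrable _ _)
        (hu2cont.stronglyMeasurableAtFilter _ _)
        hu2cont.continuousAt
    have key2 : HasDerivAt (fun z => h (x - 1) - ∫ t in (x - 1)..z, (u t) ^ 2)
        (-(u x) ^ 2) x := by
      simpa using (key.const_sub (h (x - 1)))
    exact key2.congr_of_eventuallyEq (Filter.Eventually.of_forall fun z => hid (x - 1) z)
  have hcont : Continuous h := by
    have : Differentiable ℝ h := fun x => (hderiv x).differentiableAt
    exact this.continuous
  have hd1 : Differentiable ℝ u := hu.differentiable (by norm_num)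
  have hd2 : Differentiable ℝ (deriv u) := by
    have h1 : ContDiff ℝ 1 (deriv u) := by
      have := (contDiff_succ_iff_deriv (n := 1)).mp (by exact_mod_cast hu)
      exact this.2.2
    exact h1.differentiable (by norm_num)
  -- the first integral E = u'² - x u² - u⁴ - h is constant 0
  set E : ℝ → ℝ := fun x => (deriv u x) ^ 2 - x * (u x) ^ 2 - (u x) ^ 4 - h x with hEdef
  have hE0 : ∀ x : ℝ, HasDerivAt E 0 x := by
    intro x
    have h1 : HasDerivAt u (deriv u x) x := (hd1 x).hasDerivAt
    have h2 : HasDerivAt (deriv u) (x * u x + 2 * (u x) ^ 3) x := by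
      rw [← hode x]; exact (hd2 x).hasDerivAt
    have h3 : HasDerivAt h (-(u x) ^ 2) x := hderiv x
    have H := (((h2.pow 2).sub ((hasDerivAt_id x).mul (h1.pow 2))).sub (h1.pow 4)).sub h3
    refine (H : HasDerivAt E _ x).congr_deriv ?_
    symm
    simp only [id_eq, Pi.pow_apply]
    ring
  have hEconst : ∀ x y : ℝ, E x = E y :=
    is_const_of_deriv_eq_zero (fun x => (hE0 x).differentiableAt) (fun x => (hE0 x).deriv)
  -- h ≥ 0
  have hhnn : ∀ x : ℝ, 0 ≤ h x := fun x =>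
    setIntegral_nonneg measurableSet_Ioi (fun t _ => sq_nonneg (u t))
  -- h → 0
  have hh0 : Tendsto h atTop (nhds 0) := by
    apply tendsto_of_tendsto_of_tendsto_of_le_of_le' tendsto_const_nhds hdecay
    · exact Filter.Eventually.of_forall fun x => hhnn x
    · filter_upwards [eventually_ge_atTop (1 : ℝ)] with x hx
      have h1 : (1 : ℝ) ≤ Real.sqrt x := by
        rw [show (1:ℝ) = Real.sqrt 1 by simp]
        exact Real.sqrt_le_sqrt hx
      nlinarith [hhnn x]
  have hEtop : Tendsto E atTop (nhds 0) := by
    have := (((hu'0.pow 2).sub hxu).sub (hu0.pow 4)).sub hh0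
    simpa using this
  have hfirst : ∀ x : ℝ, (deriv u x) ^ 2 = x * (u x) ^ 2 + (u x) ^ 4 + h x := by
    intro x
    have hx0 : E x = 0 := by
      have hc : Tendsto E atTop (nhds (E x)) :=
        tendsto_const_nhds.congr fun y => (hEconst x y)
      exact tendsto_nhds_unique hc hEtop
    rw [hEdef] at hx0
    simp only at hx0
    linarith
  -- h > 0 on [0, ∞)
  have hhpos : ∀ x : ℝ, 0 ≤ x → 0 < h x := by
    intro x hx
    have hs := hsplit x (x + 1) (by linarith)
    have hpos : 0 < ∫ t in x..(x + 1), (u t) ^ 2 := by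
      apply intervalIntegral.intervalIntegral_pos_of_pos_on
        (hu2cont.intervalIntegrable _ _)
      · intro t ht
        have : 0 < u t := hupos t (le_of_lt (lt_of_le_of_lt hx ht.1))
        positivity
      · linarith
    have := hhnn (x + 1)
    linarith
  -- φ = h + u·u' is ≤ 0 for x ≥ 1
  have hphile : ∀ x : ℝ, 1 ≤ x → h x + u x * deriv u x ≤ 0 := by
    intro x hx
    set φ : ℝ → ℝ := fun z => h z + u z * deriv u z with hφdef
    have hφd : ∀ z : ℝ, HasDerivAt φ
        (-(u z) ^ 2 + ((deriv u z) * deriv u z + u z * (z * u z + 2 * (u z) ^ 3))) z := by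
      intro z
      have h1 : HasDerivAt u (deriv u z) z := (hd1 z).hasDerivAt
      have h2 : HasDerivAt (deriv u) (z * u z + 2 * (u z) ^ 3) z := by
        rw [← hode z]; exact (hd2 z).hasDerivAt
      exact (hderiv z).add (h1.mul h2)
    have hφ0 : Tendsto φ atTop (nhds 0) := by
      have := hh0.add (hu0.mul hu'0)
      simpa using this
    have hmono : MonotoneOn φ (Ici x) := by
      apply monotoneOn_of_hasDerivWithinAt_nonneg (convex_Ici x)
        (fun z _ => ((hφd z).differentiableAt).continuousAt.continuousWithinAt)
        (fun z _ => (hφd z).hasDerivWithinAt)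
      intro z hz
      rw [interior_Ici] at hz
      have hz1 : (1 : ℝ) ≤ z := le_trans hx (le_of_lt hz)
      nlinarith [sq_nonneg (deriv u z), sq_nonneg (u z), sq_nonneg ((u z)^2)]
    apply ge_of_tendsto hφ0
    filter_upwards [eventually_ge_atTop x] with z hz
    exact hmono (self_mem_Ici) hz hz
  -- T = (u'/u)·h tends to 0
  have hT0 : Tendsto (fun x : ℝ => deriv u x / u x * h x) atTop (nhds 0) := by
    apply tendsto_of_tendsto_of_tendsto_of_le_of_le'
      (g := fun x : ℝ => -(deriv u x) ^ 2) (h := fun _ : ℝ => (0 : ℝ))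
    · have := (hu'0.pow 2).neg; simpa using this
    · exact tendsto_const_nhds
    · filter_upwards [eventually_ge_atTop (1 : ℝ)] with x hx
      have hux : 0 < u x := hupos x (by linarith)
      have hu'x : deriv u x < 0 := hu'neg x (by linarith)
      have hb : h x ≤ -(u x * deriv u x) := by have := hphile x hx; linarith
      rw [div_mul_eq_mul_div, le_div_iff₀ hux]
      nlinarith
    · filter_upwards [eventually_ge_atTop (1 : ℝ)] with x hx
      have hux : 0 < u x := hupos x (by linarith)
      have hu'x : deriv u x < 0 := hu'neg x (by linarith)
      have := hhnn x
      have : deriv u x / u x ≤ 0 := le_of_lt (div_neg_of_neg_of_pos hu'x hux)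
      exact mul_nonpos_of_nonpos_of_nonneg this (hhnn x)
  -- the normalized function G
  set G : ℝ → ℝ := fun x => (h x) ^ 2 + 2 * (deriv u x / u x * h x) + (u x) ^ 2 with hGdef
  have hG0 : Tendsto G atTop (nhds 0) := by
    have := ((hh0.pow 2).add (hT0.const_mul 2)).add (hu0.pow 2)
    simpa using this
  have hGderiv : ∀ x : ℝ, 0 < x → HasDerivAt G (-2 * (h x) ^ 2 / (u x) ^ 2) x := by
    intro x hx
    have hux : u x ≠ 0 := ne_of_gt (hupos x (le_of_lt hx))
    have h1 : HasDerivAt u (deriv u x) x := (hd1 x).hasDerivAt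
    have h2 : HasDerivAt (deriv u) (x * u x + 2 * (u x) ^ 3) x := by
      rw [← hode x]; exact (hd2 x).hasDerivAt
    have h3 : HasDerivAt h (-(u x) ^ 2) x := hderiv x
    have hq : HasDerivAt (fun z => deriv u z / u z)
        (((x * u x + 2 * (u x) ^ 3) * u x - deriv u x * deriv u x) / (u x) ^ 2) x :=
      h2.div h1 hux
    have H := ((h3.pow 2).add ((hq.mul h3).const_mul 2)).add (h1.pow 2)
    refine (H : HasDerivAt G _ x).congr_deriv ?_
    symm
    have hf := hfirst x
    field_simp
    linear_combination (2 * h x) * hf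
  -- main argument
  intro x₀ hx₀
  have hcontG : ContinuousOn G (Ici x₀) := by
    have hq : ContinuousOn (fun z => deriv u z / u z) (Ici x₀) :=
      hu'cont.continuousOn.div hucont.continuousOn
        (fun z hz => ne_of_gt (hupos z (le_trans hx₀ hz)))
    exact ((hcont.pow 2).continuousOn.add
      (continuousOn_const.mul (hq.mul hcont.continuousOn))).add (hucont.pow 2).continuousOn
  have hanti : StrictAntiOn G (Ici x₀) := by
    apply strictAntiOn_of_deriv_neg (convex_Ici x₀) hcontG
    intro x hx
    rw [interior_Ici] at hx
    have hxpos : 0 < x := lt_of_le_of_lt hx₀ hx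
    rw [(hGderiv x hxpos).deriv]
    apply div_neg_of_neg_of_pos
    · have := hhpos x (le_of_lt hxpos); nlinarith
    · have := hupos x (le_of_lt hxpos); positivity
  have hGnn : 0 ≤ G (x₀ + 1) := by
    apply le_of_tendsto hG0
    filter_upwards [eventually_ge_atTop (x₀ + 1)] with z hz
    exact hanti.antitoneOn (by simp : x₀ + 1 ∈ Ici x₀)
      (le_trans (by linarith) hz : z ∈ Ici x₀) hz
  have hGpos : 0 < G x₀ := by
    have := hanti (self_mem_Ici) (by simp [mem_Ici] : x₀ + 1 ∈ Ici x₀) (by linarith)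
    linarith
  have hux : 0 < u x₀ := hupos x₀ hx₀
  have hkey : (u x₀) ^ 2 * G x₀ = (u x₀) ^ 2 * (h x₀) ^ 2 +
      2 * u x₀ * deriv u x₀ * h x₀ + (u x₀) ^ 4 := by
    rw [hGdef]
    field_simp
  have : 0 < (u x₀) ^ 2 * G x₀ := by positivity
  rw [hkey] at this
  exact this
end

section
/- Let u : ℝ → ℝ be twice continuously differentiable, satisfying u''(x) = x·u(x) + 2·u(x)³ for all real x, with u(x) → 0, u'(x) → 0 and x·u(x)² → 0 as x → ∞, and such that t ↦ u(t)² and t ↦ t·u(t)² are integrable on (x, ∞) for every real x. Suppose u(x) > 0 and u'(x) < 0 for all x ≥ 0, and that √x·h(x) → 0 as x → ∞, where h(x) = ∫ₓ^∞ u(t)² dt. Define the density f(x) = h(x) · exp(-∫ₓ^∞ (t-x)·u(t)² dt). Then the function x ↦ log f(x) is concave on the set [0, ∞). -/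
open MeasureTheory Filter Set

lemma tw_integral_Ioi_eq (f : ℝ → ℝ) (hf : ∀ x : ℝ, IntegrableOn f (Ioi x)) (x : ℝ) :
    ∫ t in Ioi x, f t = (∫ t in Ioi 0, f t) - ∫ t in (0:ℝ)..x, f t := by
  rcases le_total 0 x with h | h
  · have hsplit : Ioi (0:ℝ) = Ioc 0 x ∪ Ioi x := (Ioc_union_Ioi_eq_Ioi h).symm
    have hdisj : Disjoint (Ioc (0:ℝ) x) (Ioi x) := Ioc_disjoint_Ioi le_rfl
    have h1 : ∫ t in Ioi (0:ℝ), f t = (∫ t in Ioc (0:ℝ) x, f t) + ∫ t in Ioi x, f t := by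
      rw [hsplit]
      exact setIntegral_union hdisj measurableSet_Ioi ((hf 0).mono_set (by rw [hsplit]; exact subset_union_left)) (hf x)
    rw [intervalIntegral.integral_of_le h]
    linarith [h1]
  · have hsplit : Ioi x = Ioc x 0 ∪ Ioi 0 := (Ioc_union_Ioi_eq_Ioi h).symm
    have hdisj : Disjoint (Ioc x (0:ℝ)) (Ioi (0:ℝ)) := Ioc_disjoint_Ioi le_rfl
    have h1 : ∫ t in Ioi x, f t = (∫ t in Ioc x 0, f t) + ∫ t in Ioi (0:ℝ), f t := by
      rw [hsplit]
      exact setIntegral_union hdisj measurableSet_Ioi ((hf x).mono_set (by rw [hsplit]; exact subset_union_left)) (hf 0)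
    rw [intervalIntegral.integral_symm, intervalIntegral.integral_of_le h]
    linarith [h1]

lemma tw_hasDerivAt_integral_Ioi (f : ℝ → ℝ) (hc : Continuous f)
    (hf : ∀ x : ℝ, IntegrableOn f (Ioi x)) (x : ℝ) :
    HasDerivAt (fun y : ℝ => ∫ t in Ioi y, f t) (-f x) x := by
  have heq : (fun y : ℝ => ∫ t in Ioi y, f t)
      = fun y : ℝ => (∫ t in Ioi 0, f t) - ∫ t in (0:ℝ)..y, f t :=
    funext (tw_integral_Ioi_eq f hf)
  rw [heq]
  exact (intervalIntegral.integral_hasDerivAt_right (hc.intervalIntegrable _ _)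
    (hc.stronglyMeasurableAtFilter _ _) hc.continuousAt).const_sub _

lemma tw_tendsto_integral_Ioi (f : ℝ → ℝ) (hf : ∀ x : ℝ, IntegrableOn f (Ioi x)) :
    Tendsto (fun x : ℝ => ∫ t in Ioi x, f t) atTop (nhds 0) := by
  have h := intervalIntegral_tendsto_integral_Ioi 0 (hf 0) tendsto_id
  have heq : (fun x : ℝ => ∫ t in Ioi x, f t)
      = fun x : ℝ => (∫ t in Ioi 0, f t) - ∫ t in (0:ℝ)..x, f t :=
    funext (tw_integral_Ioi_eq f hf)
  rw [heq]
  have h2 : Tendsto (fun x : ℝ => (∫ t in Ioi 0, f t) - ∫ t in (0:ℝ)..x, f t) atTop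
      (nhds ((∫ t in Ioi 0, f t) - ∫ t in Ioi 0, f t)) := tendsto_const_nhds.sub h
  simpa using h2

lemma tw_integral_Ioi_pos (f : ℝ → ℝ) (hc : Continuous f)
    (hf : ∀ x : ℝ, IntegrableOn f (Ioi x)) (hnn : ∀ t : ℝ, 0 ≤ f t)
    {x : ℝ} (hpos : ∀ t : ℝ, x ≤ t → 0 < f t) :
    0 < ∫ t in Ioi x, f t := by
  have h1 : ∫ t in Ioi x, f t = (∫ t in Ioi (x+1), f t) + ∫ t in (x:ℝ)..(x+1), f t := by
    rw [tw_integral_Ioi_eq f hf x, tw_integral_Ioi_eq f hf (x+1),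
      ← intervalIntegral.integral_add_adjacent_intervals
        (hc.intervalIntegrable 0 x) (hc.intervalIntegrable x (x+1))]
    ring
  rw [h1]
  have h2 : 0 < ∫ t in (x:ℝ)..(x+1), f t :=
    intervalIntegral.intervalIntegral_pos_of_pos_on (hc.intervalIntegrable _ _)
      (fun t ht => hpos t ht.1.le) (by linarith)
  have h3 : 0 ≤ ∫ t in Ioi (x+1), f t :=
    setIntegral_nonneg measurableSet_Ioi (fun t _ => hnn t)
  linarith


set_option maxHeartbeats 2000000 in
/-- Deift's theorem: the density `f(x) = h(x)·exp(-∫ₓ^∞ (t-x)·u(t)² dt)` of the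
Tracy–Widom distribution is log concave on `[0, ∞)`, i.e. `log ∘ f` is concave
there, where `h(x) = ∫ₓ^∞ u(t)² dt` and `u` solves Painlevé II. -/
theorem tracy_widom_density_log_concave (u : ℝ → ℝ) (hu : ContDiff ℝ 2 u)
    (hode : ∀ x : ℝ, deriv (deriv u) x = x * u x + 2 * (u x) ^ 3)
    (hu0 : Tendsto u atTop (nhds 0))
    (hu'0 : Tendsto (deriv u) atTop (nhds 0))
    (hxu : Tendsto (fun x : ℝ => x * (u x) ^ 2) atTop (nhds 0))
    (hint : ∀ x : ℝ, IntegrableOn (fun t : ℝ => (u t) ^ 2) (Ioi x))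
    (hint' : ∀ x : ℝ, IntegrableOn (fun t : ℝ => t * (u t) ^ 2) (Ioi x))
    (hupos : ∀ x : ℝ, 0 ≤ x → 0 < u x)
    (hu'neg : ∀ x : ℝ, 0 ≤ x → deriv u x < 0)
    (hdecay : Tendsto (fun x : ℝ => Real.sqrt x * ∫ t in Ioi x, (u t) ^ 2)
      atTop (nhds 0)) :
    ConcaveOn ℝ (Ici (0 : ℝ))
      (fun x : ℝ => Real.log ((∫ t in Ioi x, (u t) ^ 2) *
        Real.exp (-∫ t in Ioi x, (t - x) * (u t) ^ 2))) := by
  -- abbreviations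
  set H : ℝ → ℝ := fun x => ∫ t in Ioi x, (u t) ^ 2 with hHdef
  set K : ℝ → ℝ := fun x => ∫ t in Ioi x, t * (u t) ^ 2 with hKdef
  set G : ℝ → ℝ := fun x => ∫ t in Ioi x, (t - x) * (u t) ^ 2 with hGdef
  -- smoothness of u
  have hdu : Differentiable ℝ u := hu.differentiable (by norm_num)
  have hcu : Continuous u := hu.continuous
  have hcd2 : ContDiff ℝ 1 (deriv u) := by
    have : ContDiff ℝ (1 + 1) u := by norm_num [hu]
    exact (contDiff_succ_iff_deriv.mp this).2.2
  have hdu' : Differentiable ℝ (deriv u) := hcd2.differentiable one_ne_zero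
  have hcu' : Continuous (deriv u) := hdu'.continuous
  have hcu2 : Continuous (fun t : ℝ => (u t) ^ 2) := (hcu.pow 2)
  -- derivative of H
  have hH : ∀ x : ℝ, HasDerivAt H (-(u x) ^ 2) x := fun x =>
    tw_hasDerivAt_integral_Ioi _ hcu2 hint x
  have hK : ∀ x : ℝ, HasDerivAt K (-(x * (u x) ^ 2)) x := fun x =>
    tw_hasDerivAt_integral_Ioi _ (continuous_id.mul hcu2) hint' x
  -- G = K - x * H
  have hGeq : ∀ x : ℝ, G x = K x - x * H x := by
    intro x
    have h1 : ∀ t : ℝ, (t - x) * (u t) ^ 2 = t * (u t) ^ 2 - x * (u t) ^ 2 := fun t => by ring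
    simp only [hGdef, hKdef, hHdef, h1]
    rw [integral_sub (hint' x) ((hint x).const_mul x), MeasureTheory.integral_const_mul]
  have hG : ∀ x : ℝ, HasDerivAt G (-(H x)) x := by
    intro x
    have h1 : HasDerivAt (fun y => K y - y * H y) (-(x * (u x) ^ 2) - (1 * H x + x * (-(u x) ^ 2))) x :=
      (hK x).sub ((hasDerivAt_id' x).mul (hH x))
    have h2 : -(x * (u x) ^ 2) - (1 * H x + x * (-(u x) ^ 2)) = -(H x) := by ring
    rw [h2] at h1
    exact h1.congr_of_eventuallyEq (Eventually.of_forall (fun y => (hGeq y)))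
  -- H tends to 0
  have hHtop : Tendsto H atTop (nhds 0) := tw_tendsto_integral_Ioi _ hint
  -- the Painlevé first integral
  have hPsq : ∀ x : ℝ, (deriv u x) ^ 2 = x * (u x) ^ 2 + (u x) ^ 4 + H x := by
    set E : ℝ → ℝ := fun x => (deriv u x) ^ 2 - x * (u x) ^ 2 - (u x) ^ 4 - H x with hEdef
    have hE : ∀ x : ℝ, HasDerivAt E 0 x := by
      intro x
      have h1 : HasDerivAt (fun y => (deriv u y) ^ 2)
          ((2 : ℕ) * deriv u x ^ 1 * deriv (deriv u) x) x := ((hdu' x).hasDerivAt).pow 2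
      have h2 : HasDerivAt (fun y => y * (u y) ^ 2)
          (1 * (u x) ^ 2 + x * ((2 : ℕ) * u x ^ 1 * deriv u x)) x :=
        (hasDerivAt_id' x).mul (((hdu x).hasDerivAt).pow 2)
      have h3 : HasDerivAt (fun y => (u y) ^ 4) ((4 : ℕ) * u x ^ 3 * deriv u x) x :=
        ((hdu x).hasDerivAt).pow 4
      have h4 := ((h1.sub h2).sub h3).sub (hH x)
      refine h4.congr_deriv (Eq.symm ?_)
      rw [hode x]
      push_cast
      ring
    have hEconst : ∀ x y : ℝ, E x = E y :=
      is_const_of_deriv_eq_zero (fun z => (hE z).differentiableAt) (fun z => (hE z).deriv)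
    have hEtop : Tendsto E atTop (nhds 0) := by
      have h := (((hu'0.pow 2).sub hxu).sub (hu0.pow 4)).sub hHtop
      simpa using h
    intro x
    have hx0 : E x = 0 := by
      refine tendsto_nhds_unique (l := atTop (α := ℝ)) tendsto_const_nhds ?_
      exact hEtop.congr (fun y => (hEconst y x))
    have := hx0
    simp only [hEdef] at this
    linarith
  -- positivity of H on [0,∞)
  have hHpos : ∀ x : ℝ, 0 ≤ x → 0 < H x := by
    intro x hx
    exact tw_integral_Ioi_pos _ hcu2 hint (fun t => sq_nonneg (u t))
      (fun t ht => pow_pos (hupos t (hx.trans ht)) 2)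
  have hHnn : ∀ x : ℝ, 0 ≤ H x := fun x =>
    setIntegral_nonneg measurableSet_Ioi (fun t _ => sq_nonneg (u t))
  -- the key inequality
  -- Ψ and its derivative
  set Ψ : ℝ → ℝ := fun x => (u x) ^ 2 / H x + 2 * deriv u x / u x + H x with hΨdef
  set Ψ' : ℝ → ℝ := fun x =>
    (2 * u x * deriv u x * H x + (u x) ^ 4) / (H x) ^ 2
      + (2 * (x * u x + 2 * (u x) ^ 3) * u x - 2 * (deriv u x) ^ 2) / (u x) ^ 2
      - (u x) ^ 2 with hΨ'def
  have hΨd : ∀ x : ℝ, 0 ≤ x → HasDerivAt Ψ (Ψ' x) x := by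
    intro x hx
    have hux : u x ≠ 0 := (hupos x hx).ne'
    have hHne : H x ≠ 0 := (hHpos x hx).ne'
    have h1 := (((hdu x).hasDerivAt).pow 2).div (hH x) hHne
    have h2 := (((hdu' x).hasDerivAt).const_mul 2).div ((hdu x).hasDerivAt) hux
    have h3 := (h1.add h2).add (hH x)
    refine h3.congr_deriv (Eq.symm ?_)
    rw [hΨ'def]
    simp only
    rw [← hode x]
    push_cast
    simp only [Pi.pow_apply]
    field_simp
    ring
  -- if Ψ ≤ 0 then Ψ' is very negative
  have key1 : ∀ x : ℝ, 0 ≤ x → Ψ x ≤ 0 → Ψ' x ≤ -(2 * H x / (u x) ^ 2) := by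
    intro x hx hneg
    have hux : 0 < u x := hupos x hx
    have hHx : 0 < H x := hHpos x hx
    have h9 : 2 * (x * u x + 2 * (u x) ^ 3) * u x - 2 * (deriv u x) ^ 2
        = 2 * (u x) ^ 4 - 2 * H x := by rw [hPsq x]; ring
    have e1 : Ψ' x = ((u x) ^ 2 / H x) ^ 2 + ((u x) ^ 2 / H x) * (2 * deriv u x / u x)
        + (u x) ^ 2 - 2 * H x / (u x) ^ 2 := by
      rw [hΨ'def]
      simp only
      rw [h9]
      field_simp
      ring
    have hpsi : (u x) ^ 2 / H x + 2 * deriv u x / u x + H x ≤ 0 := hneg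
    have hA : 0 < (u x) ^ 2 / H x := by positivity
    have hAH : (u x) ^ 2 / H x * H x = (u x) ^ 2 := div_mul_cancel₀ _ hHx.ne'
    have hmul : ((u x) ^ 2 / H x) * (2 * deriv u x / u x)
        ≤ ((u x) ^ 2 / H x) * (-((u x) ^ 2 / H x + H x)) :=
      mul_le_mul_of_nonneg_left (by linarith) hA.le
    have hmul2 : ((u x) ^ 2 / H x) * (-((u x) ^ 2 / H x + H x))
        = -((u x) ^ 2 / H x) ^ 2 - (u x) ^ 2 := by
      rw [mul_neg, mul_add, hAH]; ring
    rw [e1]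
    rw [hmul2] at hmul
    linarith
  -- persistence of negativity
  have hpers : ∀ x₀ : ℝ, 0 ≤ x₀ → Ψ x₀ < 0 → ∀ x : ℝ, x₀ ≤ x → Ψ x < 0 := by
    intro x₀ hx₀ hneg
    by_contra hcon
    push_neg at hcon
    obtain ⟨z, hz1, hz2⟩ := hcon
    have hΨcont : ContinuousOn Ψ (Ici x₀) := fun y hy =>
      (hΨd y (hx₀.trans hy)).continuousAt.continuousWithinAt
    set S : Set ℝ := Ici x₀ ∩ Ψ ⁻¹' (Ici 0) with hSdef
    have hScl : IsClosed S := hΨcont.preimage_isClosed_of_isClosed isClosed_Ici isClosed_Ici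
    have hSne : S.Nonempty := ⟨z, hz1, hz2⟩
    have hSbdd : BddBelow S := ⟨x₀, fun y hy => hy.1⟩
    set x₁ : ℝ := sInf S with hx₁def
    have hx₁S : x₁ ∈ S := hScl.csInf_mem hSne hSbdd
    have hx₁0 : 0 ≤ Ψ x₁ := hx₁S.2
    have hx₀x₁ : x₀ < x₁ := by
      rcases lt_or_eq_of_le (mem_Ici.mp hx₁S.1) with h | h
      · exact h
      · exact absurd (h ▸ hx₁0) (not_le.mpr hneg)
    have hlt : ∀ y : ℝ, x₀ ≤ y → y < x₁ → Ψ y < 0 := by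
      intro y h1 h2
      by_contra h
      push_neg at h
      exact absurd (csInf_le hSbdd ⟨h1, h⟩) (not_le.mpr h2)
    have hanti : StrictAntiOn Ψ (Icc x₀ x₁) := by
      apply strictAntiOn_of_deriv_neg (convex_Icc _ _)
        (hΨcont.mono (Icc_subset_Ici_self))
      intro y hy
      rw [interior_Icc] at hy
      have hy0 : 0 ≤ y := hx₀.trans hy.1.le
      rw [(hΨd y hy0).deriv]
      have := key1 y hy0 (hlt y hy.1.le hy.2).le
      have hpos : 0 < 2 * H y / (u y) ^ 2 :=
        div_pos (by linarith [hHpos y hy0]) (pow_pos (hupos y hy0) 2)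
      exact this.trans_lt (neg_lt_zero.mpr hpos)
    have := hanti (left_mem_Icc.mpr hx₀x₁.le) (right_mem_Icc.mpr hx₀x₁.le) hx₀x₁
    linarith
  -- blow-up: Ψ cannot stay negative forever
  have hblow : ∀ x₀ : ℝ, 0 ≤ x₀ → (∀ x : ℝ, x₀ ≤ x → Ψ x < 0) → False := by
    intro x₀ hx₀ hneg
    set M : ℝ → ℝ := fun x => H x / (u x) ^ 2 with hMdef
    set M' : ℝ → ℝ := fun x => 2 * (-(deriv u x) / u x) * M x - 1 with hM'def
    have hMd : ∀ x : ℝ, 0 ≤ x → HasDerivAt M (M' x) x := by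
      intro x hx
      have hux : u x ≠ 0 := (hupos x hx).ne'
      have h := (hH x).div (((hdu x).hasDerivAt).pow 2) (pow_ne_zero 2 hux)
      refine h.congr_deriv (Eq.symm ?_)
      rw [hM'def, hMdef]
      simp only
      push_cast
      simp only [Pi.pow_apply]
      field_simp
      ring
    have hMpos : ∀ x : ℝ, 0 ≤ x → 0 < M x := fun x hx =>
      div_pos (hHpos x hx) (pow_pos (hupos x hx) 2)
    have hM'pos : ∀ x : ℝ, x₀ ≤ x → 0 < M' x := by
      intro x hx
      have hx0 : 0 ≤ x := hx₀.trans hx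
      have hux : 0 < u x := hupos x hx0
      have hHx : 0 < H x := hHpos x hx0
      have hΨx : (u x) ^ 2 / H x + 2 * deriv u x / u x + H x < 0 := hneg x hx
      have hexp : ((u x) ^ 2 / H x + 2 * deriv u x / u x + H x) * ((u x) ^ 2 * H x)
          = (u x) ^ 4 + 2 * deriv u x * u x * H x + (u x) ^ 2 * H x ^ 2 := by
        field_simp
      have h5 : (u x) ^ 4 + 2 * deriv u x * u x * H x + (u x) ^ 2 * H x ^ 2 < 0 := by
        rw [← hexp]; exact mul_neg_of_neg_of_pos hΨx (by positivity)
      have h6 : (2 * deriv u x * H x + (u x) ^ 3) * u x < 0 := by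
        nlinarith [mul_pos (pow_pos hux 2) (pow_pos hHx 2)]
      have h7 : 2 * deriv u x * H x + (u x) ^ 3 < 0 := by
        by_contra hc; push_neg at hc
        nlinarith [mul_nonneg hc hux.le]
      have hM'eq : M' x = (-2 * deriv u x * H x - (u x) ^ 3) / (u x) ^ 3 := by
        rw [hM'def, hMdef]; simp only; field_simp
      rw [hM'eq]
      apply div_pos (by linarith) (pow_pos hux 3)
    have hMcont : ContinuousOn M (Ici x₀) := fun y hy =>
      (hMd y (hx₀.trans hy)).continuousAt.continuousWithinAt
    have hMmono : MonotoneOn M (Ici x₀) := by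
      apply monotoneOn_of_deriv_nonneg (convex_Ici x₀) hMcont
      · intro y hy; rw [interior_Ici] at hy
        exact ((hMd y (hx₀.trans hy.le)).differentiableAt).differentiableWithinAt
      · intro y hy; rw [interior_Ici] at hy
        rw [(hMd y (hx₀.trans hy.le)).deriv]
        exact (hM'pos y hy.le).le
    set m₀ : ℝ := M x₀ with hm₀def
    have hm₀ : 0 < m₀ := hMpos x₀ hx₀
    have hsq : ∀ x : ℝ, 0 ≤ x → x + M x ≤ (-(deriv u x) / u x) ^ 2 := by
      intro x hx
      have hux : 0 < u x := hupos x hx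
      have he : (-(deriv u x) / u x) ^ 2 = (x * (u x) ^ 2 + (u x) ^ 4 + H x) / (u x) ^ 2 := by
        rw [neg_div, neg_sq, div_pow, hPsq x]
      rw [he, hMdef]
      simp only
      rw [le_div_iff₀ (by positivity : (0:ℝ) < (u x) ^ 2)]
      have e : (x + H x / (u x) ^ 2) * (u x) ^ 2 = x * (u x) ^ 2 + H x := by field_simp
      rw [e]
      nlinarith [pow_pos hux 4]
    have hroot : ∀ x : ℝ, 0 ≤ x → ∀ c : ℝ, c ≤ x + M x → Real.sqrt c ≤ -(deriv u x) / u x := by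
      intro x hx c hcle
      have h1 : c ≤ (-(deriv u x) / u x) ^ 2 := hcle.trans (hsq x hx)
      have h2 : 0 < -(deriv u x) / u x := div_pos (neg_pos.mpr (hu'neg x hx)) (hupos x hx)
      calc Real.sqrt c ≤ Real.sqrt ((-(deriv u x) / u x) ^ 2) := Real.sqrt_le_sqrt h1
        _ = -(deriv u x) / u x := Real.sqrt_sq h2.le
    set x₁ : ℝ := max x₀ ((1 / m₀) ^ 2) with hx₁def
    have hx₁0 : x₀ ≤ x₁ := le_max_left _ _
    have hM'1 : ∀ x : ℝ, x₁ ≤ x → 1 ≤ M' x := by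
      intro x hx
      have hx0' : x₀ ≤ x := hx₁0.trans hx
      have hx0 : 0 ≤ x := hx₀.trans hx0'
      have hn : Real.sqrt ((1 / m₀) ^ 2) ≤ Real.sqrt x :=
        Real.sqrt_le_sqrt ((le_max_right _ _).trans hx)
      rw [Real.sqrt_sq (by positivity : (0:ℝ) ≤ 1 / m₀)] at hn
      have hxx : Real.sqrt x ≤ -(deriv u x) / u x :=
        hroot x hx0 x (le_add_of_nonneg_right (hMpos x hx0).le)
      have h1 : 1 / m₀ ≤ -(deriv u x) / u x := hn.trans hxx
      have hMx : m₀ ≤ M x := hMmono self_mem_Ici (mem_Ici.mpr hx0') hx0'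
      have h2 : (1 / m₀) * m₀ ≤ (-(deriv u x) / u x) * M x :=
        mul_le_mul h1 hMx hm₀.le (le_trans (by positivity) h1)
      rw [one_div_mul_cancel hm₀.ne'] at h2
      rw [hM'def]
      simp only
      nlinarith
    have hgrow : ∀ x : ℝ, x₁ ≤ x → M x₁ + (x - x₁) ≤ M x := by
      intro x hx
      have hJmono : MonotoneOn (fun y => M y - y) (Ici x₁) := by
        apply monotoneOn_of_deriv_nonneg (convex_Ici x₁)
        · exact fun y hy => ((hMd y (hx₀.trans (hx₁0.trans hy))).continuousAt.sub
            continuousAt_id).continuousWithinAt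
        · intro y hy; rw [interior_Ici] at hy
          exact (((hMd y (hx₀.trans (hx₁0.trans hy.le))).sub
            (hasDerivAt_id' y)).differentiableAt).differentiableWithinAt
        · intro y hy; rw [interior_Ici] at hy
          rw [(show HasDerivAt (fun y => M y - y) (M' y - 1) y from (hMd y (hx₀.trans (hx₁0.trans hy.le))).sub (hasDerivAt_id' y)).deriv]
          linarith [hM'1 y hy.le]
      have := hJmono self_mem_Ici (mem_Ici.mpr hx) hx
      simp only at this
      linarith
    set x₂ : ℝ := x₁ + 1 with hx₂def
    have hx₂x₀ : x₀ ≤ x₂ := by rw [hx₂def]; linarith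
    have hx₂0 : 0 ≤ x₂ := hx₀.trans hx₂x₀
    have hMge1 : ∀ x : ℝ, x₂ ≤ x → 1 ≤ M x := by
      intro x hx
      have h1 : M x₁ + 1 ≤ M x₂ := by
        have := hgrow x₂ (by rw [hx₂def]; linarith)
        rw [hx₂def] at this ⊢
        linarith
      have h2 : M x₂ ≤ M x := hMmono (mem_Ici.mpr hx₂x₀) (mem_Ici.mpr (hx₂x₀.trans hx)) hx
      have h3 : 0 < M x₁ := hMpos x₁ (hx₀.trans hx₁0)
      linarith
    set φ : ℝ → ℝ := fun x => (Real.sqrt (M x))⁻¹ with hφdef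
    have hφd : ∀ x : ℝ, 0 ≤ x → HasDerivAt φ
        (-(M' x / (2 * Real.sqrt (M x))) / (Real.sqrt (M x)) ^ 2) x := by
      intro x hx
      exact ((hMd x hx).sqrt (hMpos x hx).ne').inv
        (Real.sqrt_ne_zero'.mpr (hMpos x hx))
    set ρ : ℝ → ℝ := fun x => φ x + x / 2 with hρdef
    have hρd : ∀ x : ℝ, 0 ≤ x → HasDerivAt ρ
        (-(M' x / (2 * Real.sqrt (M x))) / (Real.sqrt (M x)) ^ 2 + 1 / 2) x := by
      intro x hx
      exact (hφd x hx).add ((hasDerivAt_id' x).div_const 2)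
    have hρderiv_nonpos : ∀ x : ℝ, x₂ ≤ x →
        -(M' x / (2 * Real.sqrt (M x))) / (Real.sqrt (M x)) ^ 2 + 1 / 2 ≤ 0 := by
      intro x hx
      have hx0 : 0 ≤ x := hx₂0.trans hx
      have hMx : 0 < M x := hMpos x hx0
      have hM1 : 1 ≤ M x := hMge1 x hx
      have hs : 0 < Real.sqrt (M x) := Real.sqrt_pos.mpr hMx
      have hs1 : 1 ≤ Real.sqrt (M x) := Real.one_le_sqrt.mpr hM1
      have hs2 : (Real.sqrt (M x)) ^ 2 = M x := Real.sq_sqrt hMx.le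
      have hns : Real.sqrt (M x) ≤ -(deriv u x) / u x :=
        hroot x hx0 (M x) (le_add_of_nonneg_left hx0)
      have h8 : Real.sqrt (M x) * M x ≤ M' x := by
        have ha : Real.sqrt (M x) * M x ≤ (-(deriv u x) / u x) * M x :=
          mul_le_mul_of_nonneg_right hns hMx.le
        have hb : 1 ≤ Real.sqrt (M x) * M x := by nlinarith
        rw [hM'def]
        simp only
        nlinarith
      have h9 : (Real.sqrt (M x)) ^ 3 ≤ M' x := by
        have e3 : (Real.sqrt (M x)) ^ 3 = (Real.sqrt (M x)) ^ 2 * Real.sqrt (M x) := by ring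
        rw [e3, hs2, mul_comm]
        exact h8
      have h10 : (1:ℝ) / 2 ≤ M' x / (2 * Real.sqrt (M x)) / (Real.sqrt (M x)) ^ 2 := by
        rw [div_div, le_div_iff₀ (by positivity)]
        have e : (1:ℝ) / 2 * (2 * Real.sqrt (M x) * (Real.sqrt (M x)) ^ 2)
            = (Real.sqrt (M x)) ^ 3 := by ring
        rw [e]; exact h9
      have e2 : -(M' x / (2 * Real.sqrt (M x))) / (Real.sqrt (M x)) ^ 2
          = -(M' x / (2 * Real.sqrt (M x)) / (Real.sqrt (M x)) ^ 2) := by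
        rw [neg_div]
      rw [e2]
      linarith
    have hρanti : AntitoneOn ρ (Ici x₂) := by
      apply antitoneOn_of_deriv_nonpos (convex_Ici x₂)
      · exact fun y hy => (hρd y (hx₂0.trans hy)).continuousAt.continuousWithinAt
      · intro y hy; rw [interior_Ici] at hy
        exact ((hρd y (hx₂0.trans hy.le)).differentiableAt).differentiableWithinAt
      · intro y hy; rw [interior_Ici] at hy
        rw [(hρd y (hx₂0.trans hy.le)).deriv]
        exact hρderiv_nonpos y hy.le
    have hfin := hρanti self_mem_Ici (mem_Ici.mpr (by linarith : x₂ ≤ x₂ + 3)) (by linarith)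
    have hρ1 : ρ (x₂ + 3) = φ (x₂ + 3) + (x₂ + 3) / 2 := rfl
    have hρ2 : ρ x₂ = φ x₂ + x₂ / 2 := rfl
    have hφ2 : φ x₂ ≤ 1 := by
      rw [hφdef]
      simp only
      have h1 : 1 ≤ Real.sqrt (M x₂) := Real.one_le_sqrt.mpr (hMge1 x₂ le_rfl)
      calc (Real.sqrt (M x₂))⁻¹ ≤ 1⁻¹ := by
            apply inv_anti₀ one_pos h1
        _ = 1 := inv_one
    have hφ3 : 0 < φ (x₂ + 3) := by
      rw [hφdef]
      simp only
      exact inv_pos.mpr (Real.sqrt_pos.mpr (hMpos _ (by linarith)))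
    rw [hρ1, hρ2] at hfin
    linarith
  have hkey : ∀ x : ℝ, 0 ≤ x →
      0 ≤ (u x) ^ 2 / H x + 2 * deriv u x / u x + H x := by
    intro x hx
    by_contra hcon
    push_neg at hcon
    exact hblow x hx (hpers x hx hcon)
  -- conclusion
  have hHcont : Continuous H := by
    rw [continuous_iff_continuousAt]; exact fun x => (hH x).continuousAt
  have hGcont : Continuous G := by
    rw [continuous_iff_continuousAt]; exact fun x => (hG x).continuousAt
  set F : ℝ → ℝ := fun x => Real.log (H x) - G x with hFdef
  set F1 : ℝ → ℝ := fun x => -(u x) ^ 2 / H x + H x with hF1def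
  set F2 : ℝ → ℝ := fun x =>
    (-(2 * u x * deriv u x) * H x - (u x) ^ 4) / (H x) ^ 2 - (u x) ^ 2 with hF2def
  have hF : ∀ x ∈ Ioi (0:ℝ), HasDerivAt F (F1 x) x := by
    intro x hx
    have hHne : H x ≠ 0 := (hHpos x (le_of_lt hx)).ne'
    have h1 : HasDerivAt (fun y => Real.log (H y)) (-(u x) ^ 2 / H x) x := (hH x).log hHne
    have h2 := h1.sub (hG x)
    have h3 : -(u x) ^ 2 / H x - -H x = F1 x := by rw [hF1def]; ring
    rw [h3] at h2
    exact h2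
  have hF1d : ∀ x ∈ Ioi (0:ℝ), HasDerivAt F1 (F2 x) x := by
    intro x hx
    have hHne : H x ≠ 0 := (hHpos x (le_of_lt hx)).ne'
    have h1 : HasDerivAt (fun y => -(u y) ^ 2) (-((2:ℕ) * u x ^ 1 * deriv u x)) x :=
      (((hdu x).hasDerivAt).pow 2).neg
    have h2 := (h1.div (hH x) hHne).add (hH x)
    refine h2.congr_deriv (Eq.symm ?_)
    rw [hF2def]
    field_simp
    ring
  have hF2le : ∀ x ∈ Ioi (0:ℝ), F2 x ≤ 0 := by
    intro x hx
    have hΨ := hkey x (le_of_lt hx)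
    have hux := hupos x (le_of_lt hx)
    have hHx := hHpos x (le_of_lt hx)
    have h1 : 0 ≤ (u x * H x) * ((u x) ^ 2 / H x + 2 * deriv u x / u x + H x) :=
      mul_nonneg (by positivity) hΨ
    have h2 : (u x * H x) * ((u x) ^ 2 / H x + 2 * deriv u x / u x + H x)
        = u x ^ 3 + 2 * deriv u x * H x + u x * H x ^ 2 := by
      field_simp
    rw [h2] at h1
    rw [hF2def]
    rw [sub_nonpos, div_le_iff₀ (by positivity : (0:ℝ) < (H x) ^ 2)]
    nlinarith [mul_nonneg hux.le h1]
  have hFcc : ConcaveOn ℝ (Ici (0:ℝ)) F := by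
    apply concaveOn_of_hasDerivWithinAt2_nonpos (f' := F1) (f'' := F2) (convex_Ici 0)
    · apply ContinuousOn.sub
      · exact ContinuousOn.log hHcont.continuousOn (fun x hx => (hHpos x hx).ne')
      · exact hGcont.continuousOn
    · rw [interior_Ici]
      exact fun x hx => ((hF x hx).hasDerivWithinAt)
    · rw [interior_Ici]
      exact fun x hx => ((hF1d x hx).hasDerivWithinAt)
    · rw [interior_Ici]
      exact hF2le
  have hagree : ∀ x : ℝ, 0 ≤ x → Real.log (H x * Real.exp (-G x)) = F x := by
    intro x hx
    rw [Real.log_mul (hHpos x hx).ne' (Real.exp_ne_zero _), Real.log_exp]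
    ring
  refine ⟨convex_Ici 0, fun x hx y hy a b ha hb hab => ?_⟩
  have hmem : a • x + b • y ∈ Ici (0:ℝ) := (convex_Ici 0) hx hy ha hb hab
  have hgoal := hFcc.2 hx hy ha hb hab
  show a • Real.log (H x * Real.exp (-G x)) + b • Real.log (H y * Real.exp (-G y))
      ≤ Real.log (H (a • x + b • y) * Real.exp (-G (a • x + b • y)))
  rw [hagree x hx, hagree y hy, hagree _ hmem]
  exact hgoal
end

section
/- Let r₀ = (3 + √5)/2 and let a : ℕ → ℝ satisfy a(k) ≥ 0 for all k and a(k)² ≥ r₀ · a(k-1) · a(k+1) for all k ≥ 1. Define b : ℕ → ℝ by b(0) = a(0)² and b(k) = a(k)² - a(k-1) · a(k+1) for k ≥ 1. Then b(k) ≥ 0 for all k, and b(k)² ≥ r₀ · b(k-1) · b(k+1) for all k ≥ 1. -/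
/-- McNamara–Sagan lemma: the `L`-operator preserves `r₀`-factor log concavity of
nonnegative sequences for `r₀ = (3 + √5)/2`. -/
theorem L_preserves_r0_factor_log_concave (a : ℕ → ℝ)
    (ha : ∀ k, 0 ≤ a k)
    (hfac : ∀ k, 1 ≤ k → ((3 + Real.sqrt 5) / 2) * (a (k - 1) * a (k + 1)) ≤ (a k) ^ 2)
    (b : ℕ → ℝ) (hb0 : b 0 = (a 0) ^ 2)
    (hb : ∀ k, 1 ≤ k → b k = (a k) ^ 2 - a (k - 1) * a (k + 1)) :
    (∀ k, 0 ≤ b k) ∧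
      (∀ k, 1 ≤ k → ((3 + Real.sqrt 5) / 2) * (b (k - 1) * b (k + 1)) ≤ (b k) ^ 2) := by
  have hs0 : (0:ℝ) ≤ Real.sqrt 5 := Real.sqrt_nonneg 5
  have hs2 : Real.sqrt 5 ^ 2 = 5 := Real.sq_sqrt (by norm_num)
  set s := Real.sqrt 5 with hs
  have hbnn : ∀ k, 0 ≤ b k := by
    intro k
    cases k with
    | zero => rw [hb0]; positivity
    | succ m =>
      have hf := hfac (m+1) (by omega)
      rw [hb (m+1) (by omega)]
      simp only [Nat.add_sub_cancel] at hf ⊢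
      have hx : 0 ≤ a m * a (m+2) := mul_nonneg (ha m) (ha (m+2))
      nlinarith
  refine ⟨hbnn, ?_⟩
  intro k hk
  obtain ⟨m, rfl⟩ : ∃ m, k = m + 1 := ⟨k - 1, by omega⟩
  simp only [Nat.add_sub_cancel]
  have hbm1 : b (m+1) = a (m+1)^2 - a m * a (m+2) := by
    have h := hb (m+1) (by omega)
    simpa using h
  have hbm2le : b (m+2) ≤ a (m+2)^2 := by
    have h := hb (m+2) (by omega)
    simp only [show m+2-1 = m+1 from rfl] at h
    nlinarith [mul_nonneg (ha (m+1)) (ha (m+3))]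
  have hbmle : b m ≤ a m ^ 2 := by
    cases m with
    | zero => rw [hb0]
    | succ n =>
      have h := hb (n+1) (by omega)
      simp only [Nat.add_sub_cancel] at h
      nlinarith [mul_nonneg (ha n) (ha (n+2))]
  have hf := hfac (m+1) (by omega)
  simp only [Nat.add_sub_cancel] at hf
  have hx : 0 ≤ a m * a (m+2) := mul_nonneg (ha m) (ha (m+2))
  have hprod : b m * b (m+2) ≤ (a m * a (m+2))^2 := by
    calc b m * b (m+2) ≤ a m ^ 2 * a (m+2)^2 :=
          mul_le_mul hbmle hbm2le (hbnn (m+2)) (by positivity)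
      _ = (a m * a (m+2))^2 := by ring
  have hphi0 : (0:ℝ) ≤ (1+s)/2 := by linarith
  have hkey : (1+s)/2 * (a m * a (m+2)) ≤ b (m+1) := by
    rw [hbm1]; nlinarith
  have hsq := pow_le_pow_left₀ (mul_nonneg hphi0 hx) hkey 2
  nlinarith [hsq, hprod, mul_nonneg hx hx]
end

section
/- Let r₀ = (3 + √5)/2 and let a : ℕ → ℝ satisfy a(k) ≥ 0 for all k and a(k)² ≥ r₀ · a(k-1) · a(k+1) for all k ≥ 1. Define the operator L on sequences c : ℕ → ℝ by (L c)(0) = c(0)² and (L c)(k) = c(k)² - c(k-1) · c(k+1) for k ≥ 1. Then a is infinitely log concave: for every i ≥ 1 and every k, the i-fold iterate satisfies (L^[i] a)(k) ≥ 0. -/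
/-- The `L`-operator on sequences: `(L c)(0) = c(0)²` and
`(L c)(k) = c(k)² - c(k-1)·c(k+1)` for `k ≥ 1`. -/
def Lop (c : ℕ → ℝ) : ℕ → ℝ :=
  fun k => if k = 0 then (c 0) ^ 2 else (c k) ^ 2 - c (k - 1) * c (k + 1)

private lemma r_key : ((3 + Real.sqrt 5) / 2 - 1) ^ 2 = (3 + Real.sqrt 5) / 2 := by
  have h : Real.sqrt 5 ^ 2 = 5 := Real.sq_sqrt (by norm_num)
  nlinarith [h]

private lemma r_ge1 : (1 : ℝ) ≤ (3 + Real.sqrt 5) / 2 := by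
  have := Real.sqrt_nonneg 5
  linarith

private lemma step (c : ℕ → ℝ) (hc : ∀ k, 0 ≤ c k)
    (hfac : ∀ k, 1 ≤ k → ((3 + Real.sqrt 5) / 2) * (c (k - 1) * c (k + 1)) ≤ (c k) ^ 2) :
    (∀ k, 0 ≤ Lop c k) ∧
      (∀ k, 1 ≤ k →
        ((3 + Real.sqrt 5) / 2) * (Lop c (k - 1) * Lop c (k + 1)) ≤ (Lop c k) ^ 2) := by
  have hr1 : (1 : ℝ) ≤ (3 + Real.sqrt 5) / 2 := r_ge1
  have hrk : ((3 + Real.sqrt 5) / 2 - 1) ^ 2 = (3 + Real.sqrt 5) / 2 := r_key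
  have hLk : ∀ k, 1 ≤ k → Lop c k = (c k) ^ 2 - c (k - 1) * c (k + 1) := by
    intro k hk
    simp [Lop, Nat.one_le_iff_ne_zero.mp hk]
  have hnn : ∀ k, 0 ≤ Lop c k := by
    intro k
    rcases Nat.eq_zero_or_pos k with h0 | h1
    · simp [Lop, h0]; positivity
    · rw [hLk k h1]
      have hk := hfac k h1
      have hx : 0 ≤ c (k - 1) * c (k + 1) := mul_nonneg (hc _) (hc _)
      nlinarith [hk, hx, hr1]
  have hub : ∀ m, Lop c m ≤ (c m) ^ 2 := by
    intro m
    rcases Nat.eq_zero_or_pos m with h0 | h1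
    · simp [Lop, h0]
    · rw [hLk m h1]
      have hx : 0 ≤ c (m - 1) * c (m + 1) := mul_nonneg (hc _) (hc _)
      linarith
  refine ⟨hnn, ?_⟩
  intro k hk
  have hb0 : 0 ≤ Lop c (k - 1) := hnn _
  have hb2 : 0 ≤ Lop c (k + 1) := hnn _
  have hu0 : Lop c (k - 1) ≤ (c (k - 1)) ^ 2 := hub _
  have hu2 : Lop c (k + 1) ≤ (c (k + 1)) ^ 2 := hub _
  rw [hLk k hk]
  set r := (3 + Real.sqrt 5) / 2 with hrdef
  set x := c (k - 1) * c (k + 1) with hxdef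
  have hx : 0 ≤ x := mul_nonneg (hc _) (hc _)
  have hyx : r * x ≤ (c k) ^ 2 := hfac k hk
  have hy : 0 ≤ (c k) ^ 2 := sq_nonneg _
  have hprod : Lop c (k - 1) * Lop c (k + 1) ≤ x ^ 2 := by
    have : Lop c (k - 1) * Lop c (k + 1) ≤ (c (k - 1)) ^ 2 * (c (k + 1)) ^ 2 :=
      mul_le_mul hu0 hu2 hb2 (sq_nonneg _)
    calc Lop c (k - 1) * Lop c (k + 1) ≤ (c (k - 1)) ^ 2 * (c (k + 1)) ^ 2 := this
      _ = x ^ 2 := by rw [hxdef]; ring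
  have hrx2 : r * x ^ 2 ≤ ((c k) ^ 2 - x) ^ 2 := by
    nlinarith [sq_nonneg ((c k) ^ 2 - r * x), mul_nonneg (sub_nonneg.mpr hyx) hx, hrk, hx, hr1]
  calc r * (Lop c (k - 1) * Lop c (k + 1)) ≤ r * x ^ 2 := by
        apply mul_le_mul_of_nonneg_left hprod (by linarith)
    _ ≤ ((c k) ^ 2 - x) ^ 2 := hrx2

/-- An `r₀`-factor log concave nonnegative sequence, with `r₀ = (3 + √5)/2`, is
infinitely log concave: every iterate of the `L`-operator is nonnegative. -/
theorem r0_factor_log_concave_infinitely_log_concave (a : ℕ → ℝ)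
    (ha : ∀ k, 0 ≤ a k)
    (hfac : ∀ k, 1 ≤ k → ((3 + Real.sqrt 5) / 2) * (a (k - 1) * a (k + 1)) ≤ (a k) ^ 2) :
    ∀ i, 1 ≤ i → ∀ k, 0 ≤ (Lop^[i] a) k := by
  have key : ∀ i, (∀ k, 0 ≤ (Lop^[i] a) k) ∧
      (∀ k, 1 ≤ k →
        ((3 + Real.sqrt 5) / 2) * ((Lop^[i] a) (k - 1) * (Lop^[i] a) (k + 1))
          ≤ ((Lop^[i] a) k) ^ 2) := by
    intro i
    induction i with
    | zero => exact ⟨ha, hfac⟩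
    | succ n ih =>
      simp only [Function.iterate_succ_apply']
      exact step _ ih.1 ih.2
  intro i _ k
  exact (key i).1 k
end
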